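/- arXiv:0906.0649 — 5 statements merged into one kernel-verified Lean document; each statement's English description precedes it below -/
import Mathlib

section
/- Variance inequality: Let N be a CAT(0)-space and ν a Borel probability measure on N with finite second moment. Then for every z ∈ N, ∫ (d_N(z,x)² − d_N(b(ν),x)²) dν(x) ≥ d_N(z, b(ν))². -/
open MeasureTheory Metric

/-- A geodesic parametrized proportionally to arclength on `[0,1]`. -/
def IsGeodesic {N : Type*} [MetricSpace N] (γ : ℝ → N) : Prop :=
  ∀ s ∈ Set.Icc (0:ℝ) 1, ∀ t ∈ Set.Icc (0:ℝ) 1,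
    dist (γ s) (γ t) = |s - t| * dist (γ 0) (γ 1)

/-- Any two points are joined by a geodesic. -/
def GeodesicSpace (N : Type*) [MetricSpace N] : Prop :=
  ∀ x y : N, ∃ γ : ℝ → N, IsGeodesic γ ∧ γ 0 = x ∧ γ 1 = y

/-- A CAT(0)-space: a geodesic space satisfying the CAT(0) comparison inequality
(completeness is imposed separately as an instance). -/
def CAT0 (N : Type*) [MetricSpace N] : Prop :=
  GeodesicSpace N ∧ ∀ (x : N) (γ : ℝ → N), IsGeodesic γ →
    dist x (γ (1/2)) ^ 2 ≤
      (1/2) * dist x (γ 0) ^ 2 + (1/2) * dist x (γ 1) ^ 2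
        - (1/4) * dist (γ 0) (γ 1) ^ 2


/-- Variance inequality in a CAT(0)-space: for any `z`,
`∫ (d(z,x)² − d(b(ν),x)²) dν(x) ≥ d(z,b(ν))²`. -/
theorem variance_inequality
    {N : Type*} [MetricSpace N] [CompleteSpace N] (hN : CAT0 N)
    [MeasurableSpace N] [BorelSpace N]
    (ν : Measure N) [IsProbabilityMeasure ν]
    (hmom : ∃ x₀ : N, Integrable (fun y => dist x₀ y ^ 2) ν)
    (b : N) (hb : ∀ x : N, ∫ y, dist b y ^ 2 ∂ν ≤ ∫ y, dist x y ^ 2 ∂ν)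
    (z : N) :
    dist z b ^ 2 ≤ ∫ x, (dist z x ^ 2 - dist b x ^ 2) ∂ν := by
  obtain ⟨x₀, hx₀⟩ := hmom
  -- every squared distance function is integrable
  have hint : ∀ p : N, Integrable (fun x => dist p x ^ 2) ν := by
    intro p
    have hmeas : AEStronglyMeasurable (fun x : N => dist p x ^ 2) ν :=
      ((continuous_const.dist continuous_id).pow 2).aestronglyMeasurable
    have hbound : Integrable (fun x : N => 2 * dist p x₀ ^ 2 + 2 * dist x₀ x ^ 2) ν :=
      (integrable_const _).add (hx₀.const_mul 2)
    refine hbound.mono' hmeas ?_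
    filter_upwards with x
    have h1 : dist p x ≤ dist p x₀ + dist x₀ x := dist_triangle _ _ _
    have h2 : (0:ℝ) ≤ dist p x := dist_nonneg
    rw [Real.norm_eq_abs, abs_of_nonneg (by positivity)]
    nlinarith [sq_nonneg (dist p x₀ - dist x₀ x), dist_nonneg (x := p) (y := x₀),
      dist_nonneg (x := x₀) (y := x)]
  -- key induction
  have key : ∀ n : ℕ, ∀ p : N,
      (1 - (1/2:ℝ)^n) * dist b p ^ 2 ≤
        (∫ x, dist p x ^ 2 ∂ν) - ∫ x, dist b x ^ 2 ∂ν := by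
    intro n
    induction n with
    | zero => intro p; simpa using sub_nonneg.mpr (hb p)
    | succ n ih =>
      intro p
      obtain ⟨γ, hγ, hγ0, hγ1⟩ := hN.1 b p
      set m := γ (1/2) with hm
      have hd : dist b m = (1/2) * dist b p := by
        have := hγ 0 (by norm_num) (1/2) (by norm_num)
        rw [hγ0, hγ1] at this
        rw [hm, this]
        rw [show |(0:ℝ) - 1/2| = 1/2 by norm_num]
      have hcat : ∀ x : N, dist m x ^ 2 ≤
          (1/2) * dist b x ^ 2 + (1/2) * dist p x ^ 2 - (1/4) * dist b p ^ 2 := by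
        intro x
        have := hN.2 x γ hγ
        rw [hγ0, hγ1] at this
        simpa [hm, dist_comm x] using this
      -- integrate the CAT(0) inequality
      have hintg : Integrable
          (fun x : N => (1/2) * dist b x ^ 2 + (1/2) * dist p x ^ 2
            - (1/4) * dist b p ^ 2) ν :=
        (((hint b).const_mul _).add ((hint p).const_mul _)).sub (integrable_const _)
      have hI : ∫ x, dist m x ^ 2 ∂ν ≤
          (1/2) * (∫ x, dist b x ^ 2 ∂ν) + (1/2) * (∫ x, dist p x ^ 2 ∂ν)
            - (1/4) * dist b p ^ 2 := by
        have hA : Integrable (fun x : N => (1/2:ℝ) * dist b x ^ 2) ν := (hint b).const_mul _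
        have hB : Integrable (fun x : N => (1/2:ℝ) * dist p x ^ 2) ν := (hint p).const_mul _
        have hAB : Integrable
            (fun x : N => (1/2:ℝ) * dist b x ^ 2 + (1/2:ℝ) * dist p x ^ 2) ν := hA.add hB
        have := integral_mono (hint m) hintg hcat
        simp only [integral_sub hAB (integrable_const _)] at this
        simp only [integral_add hA hB, integral_const_mul, integral_const, measure_univ,
          ENNReal.toReal_one, smul_eq_mul, one_mul, probReal_univ] at this
        exact this
      have him := ih m
      rw [hd] at him
      have hnn : (0:ℝ) ≤ (1/2:ℝ)^n := by positivity
      have hd2 : (0:ℝ) ≤ dist b p ^ 2 := by positivity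
      have hstep : (1 - (1/2:ℝ)^(n+1)) * dist b p ^ 2 ≤
          (∫ x, dist p x ^ 2 ∂ν) - ∫ x, dist b x ^ 2 ∂ν := by
        have hpow : (1/2:ℝ)^(n+1) = (1/2) * (1/2)^n := pow_succ' _ _
        nlinarith [him, hI]
      exact hstep
  -- take the limit n → ∞
  have hlim : Filter.Tendsto (fun n : ℕ => (1 - (1/2:ℝ)^n) * dist b z ^ 2)
      Filter.atTop (nhds (dist b z ^ 2)) := by
    have h : Filter.Tendsto (fun n : ℕ => (1/2:ℝ)^n) Filter.atTop (nhds 0) :=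
      tendsto_pow_atTop_nhds_zero_of_lt_one (by norm_num) (by norm_num)
    have := ((tendsto_const_nhds.sub h).mul tendsto_const_nhds :
      Filter.Tendsto (fun n : ℕ => (1 - (1/2:ℝ)^n) * dist b z ^ 2) Filter.atTop
        (nhds ((1 - 0) * dist b z ^ 2)))
    simpa using this
  have hfinal : dist b z ^ 2 ≤ (∫ x, dist z x ^ 2 ∂ν) - ∫ x, dist b x ^ 2 ∂ν :=
    le_of_tendsto hlim (Filter.Eventually.of_forall fun n => key n z)
  rw [integral_sub (hint z) (hint b)]
  rwa [dist_comm z b]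
end

section
/- Let N be a CAT(0)-space. For each n ≥ 1, the map sₙ : Nⁿ → N sending (x₁,…,xₙ) to the inductive mean value of x₁,…,xₙ is (1/n)-Lipschitz with respect to the ℓ¹-distance d((xᵢ),(yᵢ)) = Σᵢ d_N(xᵢ,yᵢ) on Nⁿ. -/
open MeasureTheory Metric

section Aux
variable {N : Type*} [MetricSpace N]

/-- Reversal of a geodesic. -/
lemma IsGeodesic.reverse {γ : ℝ → N} (h : IsGeodesic γ) :
    IsGeodesic (fun t => γ (1 - t)) := by
  intro s hs t ht
  have h1s : (1 - s) ∈ Set.Icc (0:ℝ) 1 := by constructor <;> [linarith [hs.2]; linarith [hs.1]]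
  have h1t : (1 - t) ∈ Set.Icc (0:ℝ) 1 := by constructor <;> [linarith [ht.2]; linarith [ht.1]]
  simp only
  rw [h _ h1s _ h1t]
  have e0 : (1:ℝ) - 0 = 1 := by norm_num
  have e1 : (1:ℝ) - 1 = 0 := by norm_num
  rw [e0, e1, dist_comm (γ 1) (γ 0)]
  congr 1
  rw [abs_sub_comm]
  ring_nf

/-- Affine reparametrization of a geodesic. -/
lemma IsGeodesic.affine {γ : ℝ → N} (h : IsGeodesic γ) {a b : ℝ}
    (ha : a ∈ Set.Icc (0:ℝ) 1) (hb : b ∈ Set.Icc (0:ℝ) 1) :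
    IsGeodesic (fun u => γ (a + u * (b - a))) := by
  intro s hs t ht
  have mem : ∀ u ∈ Set.Icc (0:ℝ) 1, a + u * (b - a) ∈ Set.Icc (0:ℝ) 1 := by
    intro u hu
    constructor <;> nlinarith [ha.1, ha.2, hb.1, hb.2, hu.1, hu.2]
  simp only
  rw [h _ (mem s hs) _ (mem t ht)]
  have e0 : a + 0 * (b - a) = a := by ring
  have e1 : a + 1 * (b - a) = b := by ring
  rw [e0, e1, h a ha b hb]
  rw [show a + s * (b - a) - (a + t * (b - a)) = (s - t) * (b - a) by ring, abs_mul,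
    abs_sub_comm a b]
  ring

lemma IsGeodesic.dist_self_half {γ : ℝ → N} (h : IsGeodesic γ) :
    dist (γ 0) (γ (1/2)) = (1/2) * dist (γ 0) (γ 1) := by
  rw [h 0 (by norm_num) (1/2) (by norm_num)]
  norm_num

/-- Midpoints of two geodesics with common start point. -/
lemma midpoint_common_start (hN : CAT0 N) {γ η : ℝ → N}
    (hγ : IsGeodesic γ) (hη : IsGeodesic η) (h0 : γ 0 = η 0) :
    dist (γ (1/2)) (η (1/2)) ≤ (1/2) * dist (γ 1) (η 1) := by
  have H1 := hN.2 (η (1/2)) γ hγ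
  have H2 := hN.2 (γ 1) η hη
  rw [h0] at H1
  have e1 : dist (η (1/2)) (η 0) = (1/2) * dist (η 0) (η 1) := by
    rw [dist_comm]; exact hη.dist_self_half
  have c1 : dist (η (1/2)) (γ 1) = dist (γ 1) (η (1/2)) := dist_comm _ _
  have c2 : dist (γ 1) (η 0) = dist (η 0) (γ 1) := dist_comm _ _
  have c3 : dist (γ (1/2)) (η (1/2)) = dist (η (1/2)) (γ (1/2)) := dist_comm _ _
  have hsq : dist (γ (1/2)) (η (1/2)) ^ 2 ≤ ((1/2) * dist (γ 1) (η 1)) ^ 2 := by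
    rw [c3]; rw [e1, c1] at H1; rw [c2] at H2; nlinarith [H1, H2]
  have d1 : (0:ℝ) ≤ dist (γ (1/2)) (η (1/2)) := dist_nonneg
  have d2 : (0:ℝ) ≤ dist (γ 1) (η 1) := dist_nonneg
  nlinarith [hsq, d1, d2]

end Aux

section Aux2
variable {N : Type*} [MetricSpace N]

/-- Midpoints of two arbitrary geodesics. -/
lemma midpoint_general (hN : CAT0 N) {γ η : ℝ → N}
    (hγ : IsGeodesic γ) (hη : IsGeodesic η) :
    dist (γ (1/2)) (η (1/2)) ≤ (1/2) * dist (γ 0) (η 0) + (1/2) * dist (γ 1) (η 1) := by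
  obtain ⟨σ, hσ, hσ0, hσ1⟩ := hN.1 (γ 0) (η 1)
  have h1 : dist (γ (1/2)) (σ (1/2)) ≤ (1/2) * dist (γ 1) (σ 1) :=
    midpoint_common_start hN hγ hσ hσ0.symm
  have h2 : dist (σ (1/2)) (η (1/2)) ≤ (1/2) * dist (σ 0) (η 0) := by
    have H := midpoint_common_start hN hσ.reverse hη.reverse
      (by show σ (1 - 0) = η (1 - 0); norm_num [hσ1])
    norm_num at H
    exact H
  calc dist (γ (1/2)) (η (1/2))
      ≤ dist (γ (1/2)) (σ (1/2)) + dist (σ (1/2)) (η (1/2)) := dist_triangle _ _ _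
    _ ≤ (1/2) * dist (γ 0) (η 0) + (1/2) * dist (γ 1) (η 1) := by
        rw [hσ1] at h1; rw [hσ0] at h2; linarith [dist_comm (γ 0) (η 0)]

/-- A midpoint-convex, Lipschitz function on `[0,1]` lies below its chord. -/
lemma midpointConvex_le_chord {f : ℝ → ℝ} {L : ℝ} (hL : 0 ≤ L)
    (hlip : ∀ s ∈ Set.Icc (0:ℝ) 1, ∀ t ∈ Set.Icc (0:ℝ) 1, |f s - f t| ≤ L * |s - t|)
    (hmid : ∀ s ∈ Set.Icc (0:ℝ) 1, ∀ t ∈ Set.Icc (0:ℝ) 1,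
      f ((s + t) / 2) ≤ (f s + f t) / 2)
    {t : ℝ} (ht : t ∈ Set.Icc (0:ℝ) 1) :
    f t ≤ (1 - t) * f 0 + t * f 1 := by
  have dyadic : ∀ m : ℕ, ∀ k : ℕ, k ≤ 2^m →
      f (k / 2^m) ≤ (1 - k / 2^m) * f 0 + (k / 2^m) * f 1 := by
    intro m
    induction m with
    | zero =>
      intro k hk
      interval_cases k <;> norm_num
    | succ m ih =>
      intro k hk
      rcases Nat.even_or_odd k with ⟨j, hj⟩ | ⟨j, hj⟩
      · subst hj
        have hj2 : j ≤ 2^m := by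
          have : 2^(m+1) = 2 * 2^m := by ring
          omega
        have e : ((j + j : ℕ) : ℝ) / 2^(m+1) = (j:ℝ)/2^m := by
          have h2 : (2:ℝ)^m ≠ 0 := by positivity
          push_cast [pow_succ]
          field_simp
          ring
        rw [e]; exact ih j hj2
      · subst hj
        have hj2 : j + 1 ≤ 2^m := by
          have : 2^(m+1) = 2 * 2^m := by ring
          omega
        have hj1 : j ≤ 2^m := by omega
        have h2m : (0:ℝ) < 2^m := by positivity
        have ha : (j:ℝ)/2^m ∈ Set.Icc (0:ℝ) 1 := by
          constructor
          · positivity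
          · rw [div_le_one h2m]
            have h := Nat.cast_le (α := ℝ) |>.mpr hj1
            push_cast at h; linarith
        have hb : ((j:ℝ)+1)/2^m ∈ Set.Icc (0:ℝ) 1 := by
          constructor
          · positivity
          · rw [div_le_one h2m]
            have h := Nat.cast_le (α := ℝ) |>.mpr hj2
            push_cast at h; linarith
        have e : ((2*j + 1 : ℕ) : ℝ) / 2^(m+1) = ((j:ℝ)/2^m + ((j:ℝ)+1)/2^m) / 2 := by
          have h2 : (2:ℝ)^m ≠ 0 := by positivity
          push_cast [pow_succ]
          field_simp
          ring
        rw [e]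
        calc f (((j:ℝ)/2^m + ((j:ℝ)+1)/2^m) / 2)
            ≤ (f ((j:ℝ)/2^m) + f (((j:ℝ)+1)/2^m)) / 2 := hmid _ ha _ hb
          _ ≤ (1 - ((j:ℝ)/2^m + ((j:ℝ)+1)/2^m) / 2) * f 0
              + (((j:ℝ)/2^m + ((j:ℝ)+1)/2^m) / 2) * f 1 := by
              have i1 := ih j hj1
              have i2 := ih (j+1) hj2
              push_cast at i1 i2 ⊢
              linarith
  -- approximation step
  set C : ℝ := L + |f 0| + |f 1| with hC
  have hC0 : 0 ≤ C := by positivity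
  have key : ∀ m : ℕ, f t ≤ (1 - t) * f 0 + t * f 1 + C * (1/2)^m := by
    intro m
    set k : ℕ := ⌊t * 2^m⌋₊ with hk
    have htm : 0 ≤ t * 2^m := mul_nonneg ht.1 (by positivity)
    have h2m : (0:ℝ) < 2^m := by positivity
    have hfl : (k:ℝ) ≤ t * 2^m := Nat.floor_le htm
    have hfl2 : t * 2^m < (k:ℝ) + 1 := Nat.lt_floor_add_one _
    have hk2 : k ≤ 2^m := by
      have : t * 2^m ≤ ((2^m : ℕ) : ℝ) := by push_cast; nlinarith [ht.1, ht.2]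
      calc k ≤ ⌊((2^m : ℕ) : ℝ)⌋₊ := Nat.floor_le_floor this
        _ = 2^m := Nat.floor_natCast _
    set u : ℝ := (k:ℝ) / 2^m with hu
    have hu1 : u ∈ Set.Icc (0:ℝ) 1 := by
      constructor
      · rw [hu]; positivity
      · rw [hu, div_le_one h2m]
        calc (k:ℝ) ≤ ((2^m:ℕ):ℝ) := by exact_mod_cast hk2
          _ = 2^m := by push_cast; ring
    have hut1 : u ≤ t := by rw [hu, div_le_iff₀ h2m]; linarith
    have hut2 : t - u ≤ (1/2)^m := by
      have h3 : t ≤ ((k:ℝ)+1)/2^m := by rw [le_div_iff₀ h2m]; linarith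
      have e : ((1:ℝ)/2)^m = 1/2^m := by rw [div_pow, one_pow]
      have e2 : 1/(2:ℝ)^m + (k:ℝ)/2^m = ((k:ℝ)+1)/2^m := by ring
      rw [hu, e]
      linarith
    have hd := dyadic m k hk2
    have hlp := hlip t ht u hu1
    have habs : |t - u| ≤ (1/2)^m := by rw [abs_of_nonneg (by linarith)]; exact hut2
    have h1 : f t - f u ≤ L * (1/2)^m := by
      have := (abs_le.mp hlp).2
      have hmul : L * |t - u| ≤ L * (1/2)^m := mul_le_mul_of_nonneg_left habs hL
      linarith
    have h2 : (1 - u) * f 0 + u * f 1 ≤ (1 - t) * f 0 + t * f 1 + (|f 0| + |f 1|) * (1/2)^m := by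
      have e : (1 - u) * f 0 + u * f 1 = (1 - t) * f 0 + t * f 1 + (t - u) * f 0 - (t - u) * f 1 := by ring
      have b0 : (t - u) * f 0 ≤ (1/2)^m * |f 0| := by
        calc (t - u) * f 0 ≤ (t - u) * |f 0| := mul_le_mul_of_nonneg_left (le_abs_self _) (by linarith)
          _ ≤ (1/2)^m * |f 0| := mul_le_mul_of_nonneg_right hut2 (abs_nonneg _)
      have b1 : -((t - u) * f 1) ≤ (1/2)^m * |f 1| := by
        calc -((t - u) * f 1) = (t - u) * (-f 1) := by ring
          _ ≤ (t - u) * |f 1| := mul_le_mul_of_nonneg_left (neg_le_abs _) (by linarith)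
          _ ≤ (1/2)^m * |f 1| := mul_le_mul_of_nonneg_right hut2 (abs_nonneg _)
      rw [e]; nlinarith
    have : f t ≤ f u + L * (1/2)^m := by
      rw [hu] at h1 ⊢
      linarith
    calc f t ≤ f u + L * (1/2)^m := this
      _ ≤ (1 - u) * f 0 + u * f 1 + L * (1/2)^m := by rw [hu] at *; linarith
      _ ≤ (1 - t) * f 0 + t * f 1 + C * (1/2)^m := by rw [hC]; linarith
  have hlim : Filter.Tendsto (fun m : ℕ => (1 - t) * f 0 + t * f 1 + C * (1/2)^m)
      Filter.atTop (nhds ((1 - t) * f 0 + t * f 1)) := by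
    have h0 : Filter.Tendsto (fun m : ℕ => ((1:ℝ)/2)^m) Filter.atTop (nhds 0) :=
      tendsto_pow_atTop_nhds_zero_of_lt_one (by norm_num) (by norm_num)
    have := (h0.const_mul C).const_add ((1 - t) * f 0 + t * f 1)
    simpa using this
  exact ge_of_tendsto' hlim key

end Aux2

section Aux3
variable {N : Type*} [MetricSpace N]

/-- Convexity of the distance between two geodesics in a CAT(0) space. -/
lemma geodesic_dist_convex (hN : CAT0 N) {γ η : ℝ → N}
    (hγ : IsGeodesic γ) (hη : IsGeodesic η) {t : ℝ} (ht : t ∈ Set.Icc (0:ℝ) 1) :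
    dist (γ t) (η t) ≤ (1 - t) * dist (γ 0) (η 0) + t * dist (γ 1) (η 1) := by
  set f : ℝ → ℝ := fun s => dist (γ s) (η s) with hf
  set L : ℝ := dist (γ 0) (γ 1) + dist (η 0) (η 1) with hLdef
  have hL : 0 ≤ L := by positivity
  have hlip : ∀ s ∈ Set.Icc (0:ℝ) 1, ∀ u ∈ Set.Icc (0:ℝ) 1, |f s - f u| ≤ L * |s - u| := by
    intro s hs u hu
    have h1 : dist (γ s) (η s) ≤ dist (γ s) (γ u) + dist (γ u) (η u) + dist (η u) (η s) :=
      dist_triangle4 _ _ _ _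
    have h2 : dist (γ u) (η u) ≤ dist (γ u) (γ s) + dist (γ s) (η s) + dist (η s) (η u) :=
      dist_triangle4 _ _ _ _
    have eγ := hγ s hs u hu
    have eη := hη s hs u hu
    have eγ' := hγ u hu s hs
    have eη' := hη u hu s hs
    rw [abs_sub_comm u s] at eγ' eη'
    rw [hf, abs_le]
    constructor
    · simp only
      nlinarith [abs_nonneg (s - u)]
    · simp only
      nlinarith [abs_nonneg (s - u)]
  have hmid : ∀ s ∈ Set.Icc (0:ℝ) 1, ∀ u ∈ Set.Icc (0:ℝ) 1,
      f ((s + u) / 2) ≤ (f s + f u) / 2 := by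
    intro s hs u hu
    have H := midpoint_general hN (hγ.affine hs hu) (hη.affine hs hu)
    try simp only at H
    rw [show s + 1/2 * (u - s) = (s + u)/2 by ring, show s + 0 * (u - s) = s by ring,
      show s + 1 * (u - s) = u by ring] at H
    rw [hf]
    simp only
    linarith
  have := midpointConvex_le_chord hL hlip hmid ht
  rw [hf] at this
  simpa using this

end Aux3

/-- `IsInductiveMean n x s` : `s` is the inductive mean value of the `n+1` points
`x 0, …, x n`, defined recursively by geodesic interpolation:
`s₁ = y₁` and `sₖ = γ(1/k)` where `γ` is the geodesic from `sₖ₋₁` to `yₖ`. -/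
def IsInductiveMean {N : Type*} [MetricSpace N] : (n : ℕ) → (Fin (n+1) → N) → N → Prop
  | 0 => fun x s => s = x 0
  | n+1 => fun x s => ∃ s', IsInductiveMean n (fun i => x i.castSucc) s' ∧
      ∃ γ : ℝ → N, IsGeodesic γ ∧ γ 0 = s' ∧ γ 1 = x (Fin.last (n+1)) ∧
        s = γ (1 / (n+2))

/-- The inductive-mean map on `N^(n+1)` is `1/(n+1)`-Lipschitz for the ℓ¹-distance. -/
theorem inductiveMean_lipschitz
    {N : Type*} [MetricSpace N] [CompleteSpace N] (hN : CAT0 N)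
    (n : ℕ) (x y : Fin (n+1) → N) (sx sy : N)
    (hx : IsInductiveMean n x sx) (hy : IsInductiveMean n y sy) :
    dist sx sy ≤ (1 / (n+1 : ℝ)) * ∑ i, dist (x i) (y i) := by
  induction n generalizing sx sy with
  | zero =>
    rw [show IsInductiveMean 0 x sx = (sx = x 0) from rfl] at hx
    rw [show IsInductiveMean 0 y sy = (sy = y 0) from rfl] at hy
    subst hx hy
    simp
  | succ n ih =>
    obtain ⟨sx', hx', γ, hγ, hγ0, hγ1, hsx⟩ := hx
    obtain ⟨sy', hy', η, hη, hη0, hη1, hsy⟩ := hy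
    have IH := ih _ _ _ _ hx' hy'
    have hn2 : (0:ℝ) < (n:ℝ) + 2 := by positivity
    have hn1 : (0:ℝ) < (n:ℝ) + 1 := by positivity
    have ht : (1 / ((n:ℝ)+2)) ∈ Set.Icc (0:ℝ) 1 := by
      constructor
      · positivity
      · rw [div_le_one hn2]; linarith
    have conv := geodesic_dist_convex hN hγ hη ht
    rw [hγ0, hγ1, hη0, hη1] at conv
    rw [hsx, hsy]
    have hsum : ∑ i : Fin (n+2), dist (x i) (y i)
        = (∑ i : Fin (n+1), dist (x i.castSucc) (y i.castSucc))
          + dist (x (Fin.last (n+1))) (y (Fin.last (n+1))) := Fin.sum_univ_castSucc _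
    have hcoef : (0:ℝ) ≤ 1 - 1/((n:ℝ)+2) := by
      rw [sub_nonneg, div_le_one hn2]; linarith
    have h1 : (1 - 1/((n:ℝ)+2)) * dist sx' sy'
        ≤ (1 - 1/((n:ℝ)+2)) * ((1/((n:ℝ)+1)) * ∑ i : Fin (n+1), dist (x i.castSucc) (y i.castSucc)) :=
      mul_le_mul_of_nonneg_left IH hcoef
    have he : (1 - 1/((n:ℝ)+2)) * ((1/((n:ℝ)+1)) * ∑ i : Fin (n+1), dist (x i.castSucc) (y i.castSucc))
        = (1/((n:ℝ)+2)) * ∑ i : Fin (n+1), dist (x i.castSucc) (y i.castSucc) := by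
      field_simp
      ring
    have hgoal : (1 / ((n+1:ℕ)+1 : ℝ)) = 1/((n:ℝ)+2) := by push_cast; ring_nf
    rw [hgoal, hsum]
    rw [he] at h1
    calc dist (γ (1 / ((n:ℝ)+2))) (η (1 / ((n:ℝ)+2)))
        ≤ (1 - 1/((n:ℝ)+2)) * dist sx' sy' + (1/((n:ℝ)+2)) * dist (x (Fin.last (n+1))) (y (Fin.last (n+1))) := conv
      _ ≤ (1/((n:ℝ)+2)) * (∑ i : Fin (n+1), dist (x i.castSucc) (y i.castSucc))
          + (1/((n:ℝ)+2)) * dist (x (Fin.last (n+1))) (y (Fin.last (n+1))) := by linarith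
      _ = (1/((n:ℝ)+2)) * ((∑ i : Fin (n+1), dist (x i.castSucc) (y i.castSucc))
          + dist (x (Fin.last (n+1))) (y (Fin.last (n+1)))) := by ring
end

section
/- Let X be an mm-space and κ > κ' > 0. Then ObsDiam_ℝ(X; −κ') ≥ Sep(X; κ, κ). -/
open MeasureTheory Metric ENNReal

/-- The separation distance `Sep(ν; κ₁, κ₂)`: the supremum of the distance between two
Borel sets of measure at least `κ₁` resp. `κ₂` (and `0` if there is no such pair). -/
noncomputable def sep {X : Type*} [MetricSpace X] [MeasurableSpace X]
    (ν : Measure X) (κ₁ κ₂ : ℝ) : ℝ≥0∞ :=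
  ⨆ (A : Set X) (B : Set X) (_ : MeasurableSet A) (_ : MeasurableSet B)
    (_ : ENNReal.ofReal κ₁ ≤ ν A) (_ : ENNReal.ofReal κ₂ ≤ ν B),
      ⨅ (a ∈ A) (b ∈ B), edist a b

/-- The partial diameter `diam(ν, 1−κ)`: the infimum of the diameters of Borel sets of
measure at least `1−κ`. -/
noncomputable def partialDiam {Y : Type*} [MetricSpace Y] [MeasurableSpace Y]
    (ν : Measure Y) (κ : ℝ) : ℝ≥0∞ :=
  ⨅ (Y₀ : Set Y) (_ : MeasurableSet Y₀) (_ : ENNReal.ofReal (1 - κ) ≤ ν Y₀),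
    EMetric.diam Y₀

/-- The observable diameter `ObsDiam_ℝ(X; −κ)`: the supremum of the partial diameters
`diam(f_*μ, 1−κ)` over all 1-Lipschitz functions `f : X → ℝ`. -/
noncomputable def obsDiam {X : Type*} [MetricSpace X] [MeasurableSpace X]
    (μ : Measure X) (κ : ℝ) : ℝ≥0∞ :=
  ⨆ (f : X → ℝ) (_ : LipschitzWith 1 f), partialDiam (μ.map f) κ

theorem sep_le_obsDiam'
    {X : Type*} [MetricSpace X] [MeasurableSpace X] [BorelSpace X]
    (μ : Measure X) [IsProbabilityMeasure μ]
    (κ κ' : ℝ) (hκ' : 0 < κ') (hκ : κ' < κ) :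
    (⨆ (A : Set X) (B : Set X) (_ : MeasurableSet A) (_ : MeasurableSet B)
    (_ : ENNReal.ofReal κ ≤ μ A) (_ : ENNReal.ofReal κ ≤ μ B),
      ⨅ (a ∈ A) (b ∈ B), edist a b) ≤
    ⨆ (f : X → ℝ) (_ : LipschitzWith 1 f),
      ⨅ (Y₀ : Set ℝ) (_ : MeasurableSet Y₀) (_ : ENNReal.ofReal (1 - κ') ≤ (μ.map f) Y₀),
        EMetric.diam Y₀ := by
  simp only [iSup_le_iff]
  intro A B hA hB hμA hμB
  set f : X → ℝ := fun x => infDist x A with hf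
  have hfL : LipschitzWith 1 f := lipschitz_infDist_pt A
  have hfm : Measurable f := hfL.continuous.measurable
  refine le_iSup_of_le f (le_iSup_of_le hfL ?_)
  refine le_iInf fun Y₀ => le_iInf fun hY₀ => le_iInf fun h1 => ?_
  rw [Measure.map_apply hfm hY₀] at h1
  -- key nonemptiness fact
  have inter : ∀ C : Set X, MeasurableSet C → ENNReal.ofReal κ ≤ μ C →
      (C ∩ f ⁻¹' Y₀).Nonempty := by
    intro C hC hμC
    rw [Set.nonempty_iff_ne_empty]
    intro hemp
    have hdisj : Disjoint C (f ⁻¹' Y₀) := Set.disjoint_iff_inter_eq_empty.mpr hemp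
    have hsum : μ C + μ (f ⁻¹' Y₀) ≤ 1 := by
      rw [← measure_union hdisj (hfm hY₀)]
      exact prob_le_one
    have h2 : ENNReal.ofReal (κ + (1 - κ')) ≤ 1 :=
      le_trans (le_trans ENNReal.ofReal_add_le (add_le_add hμC h1)) hsum
    have h3 : (1 : ℝ≥0∞) < ENNReal.ofReal (κ + (1 - κ')) := by
      rw [← ENNReal.ofReal_one]
      exact (ENNReal.ofReal_lt_ofReal_iff (by linarith)).mpr (by linarith)
    exact absurd h2 (not_le.mpr h3)
  obtain ⟨a, haA, haY⟩ := inter A hA hμA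
  obtain ⟨b, hbB, hbY⟩ := inter B hB hμB
  have h4 : (⨅ a ∈ A, ⨅ b ∈ B, edist a b) ≤ Metric.infEDist b A := by
    rw [Metric.infEDist]
    refine le_iInf fun a' => le_iInf fun ha' => ?_
    calc (⨅ a ∈ A, ⨅ b ∈ B, edist a b) ≤ ⨅ b ∈ B, edist a' b := iInf₂_le a' ha'
    _ ≤ edist a' b := iInf₂_le b hbB
    _ = edist b a' := edist_comm _ _
  have hfa : f a = 0 := infDist_zero_of_mem haA
  have h5 : Metric.infEDist b A = ENNReal.ofReal (f b) := by
    rw [hf]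
    simp only [infDist]
    rw [ENNReal.ofReal_toReal (Metric.infEdist_ne_top ⟨a, haA⟩)]
  have h6 : ENNReal.ofReal (f b) ≤ edist (f a) (f b) := by
    rw [edist_dist, Real.dist_eq, hfa]
    exact ENNReal.ofReal_le_ofReal (by rw [zero_sub, abs_neg]; exact le_abs_self _)
  calc (⨅ a ∈ A, ⨅ b ∈ B, edist a b) ≤ ENNReal.ofReal (f b) := h5 ▸ h4
  _ ≤ edist (f a) (f b) := h6
  _ ≤ EMetric.diam Y₀ := EMetric.edist_le_diam_of_mem haY hbY


/-- For `κ > κ' > 0`, `ObsDiam_ℝ(X; −κ') ≥ Sep(X; κ, κ)`. -/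
theorem sep_le_obsDiam
    {X : Type*} [MetricSpace X] [MeasurableSpace X] [BorelSpace X]
    (μ : Measure X) [IsProbabilityMeasure μ]
    (κ κ' : ℝ) (hκ' : 0 < κ') (hκ : κ' < κ) :
    sep μ κ κ ≤ obsDiam μ κ' :=
  sep_le_obsDiam' μ κ κ' hκ' hκ
end

section
/- Let X = X₁ × ⋯ × Xₙ be a product of mm-spaces Xᵢ with diam(Xᵢ) ≤ Dᵢ, with the product measure and ℓ¹-distance. Then the concentration function satisfies α_X(r) ≤ exp(−r²/(8D²)) for all r > 0, where D² = Σᵢ Dᵢ². -/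
open MeasureTheory Metric

open Real ProbabilityTheory

lemma bdd_integrable {Ω : Type*} [MeasurableSpace Ω] {ν : Measure Ω} [IsFiniteMeasure ν]
    {h : Ω → ℝ} (hm : AEStronglyMeasurable h ν) {C : ℝ} (hb : ∀ ω, |h ω| ≤ C) :
    Integrable h ν :=
  Integrable.mono' (integrable_const C) hm (ae_of_all _ fun ω => by
    simpa [Real.norm_eq_abs] using hb ω)

lemma hoeffding_half {Ω : Type*} [MeasurableSpace Ω] {ν : Measure Ω} [IsProbabilityMeasure ν]
    {g : Ω → ℝ} (hg : Measurable g) {c : ℝ} (hosc : ∀ ω ω', g ω - g ω' ≤ c) (t : ℝ) :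
    ∫ ω, Real.exp (t * (g ω - ∫ x, g x ∂ν)) ∂ν ≤ Real.exp (t ^ 2 * c ^ 2 / 2) := by
  rcases isEmpty_or_nonempty Ω with hΩ | hΩ
  · exfalso
    have h1 : ν Set.univ = 1 := measure_univ
    rw [Set.univ_eq_empty_iff.2 hΩ, measure_empty] at h1
    simp at h1
  have hc0 : 0 ≤ c := by simpa using hosc (Classical.arbitrary Ω) (Classical.arbitrary Ω)
  set ω₀ := Classical.arbitrary Ω with hω₀
  have hgb : ∀ ω, |g ω| ≤ |g ω₀| + c := by
    intro ω
    have h1 := hosc ω ω₀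
    have h2 := hosc ω₀ ω
    have := abs_nonneg (g ω₀)
    rw [abs_le] at *
    constructor <;> [nlinarith [abs_le.1 (le_refl |g ω₀|)]; nlinarith [le_abs_self (g ω₀), neg_abs_le (g ω₀)]]
  have hgint : Integrable g ν := bdd_integrable hg.aestronglyMeasurable hgb
  set m := ∫ x, g x ∂ν with hm
  have hmb : ∀ ω, |g ω - m| ≤ c := by
    intro ω
    have h1 : g ω - c ≤ m := by
      calc g ω - c = ∫ _, (g ω - c) ∂ν := by simp [integral_const]
        _ ≤ m := integral_mono (integrable_const _) hgint (fun ω' => by linarith [hosc ω ω'])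
    have h2 : m ≤ g ω + c := by
      have : m ≤ ∫ _, (g ω + c) ∂ν :=
        integral_mono hgint (integrable_const _) (fun ω' => by linarith [hosc ω' ω])
      simpa [integral_const] using this
    rw [abs_le]; constructor <;> linarith
  rcases eq_or_lt_of_le hc0 with hc | hc
  · have hz : ∀ ω, g ω = m := by
      intro ω
      have h := hmb ω
      rw [← hc] at h
      have h1 := abs_nonneg (g ω - m)
      have h2 : |g ω - m| = 0 := le_antisymm h h1
      have := abs_eq_zero.1 h2
      linarith
    calc ∫ ω, Real.exp (t * (g ω - m)) ∂ν = ∫ _ω, (1:ℝ) ∂ν := by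
          apply integral_congr_ae; filter_upwards with ω; rw [hz ω]; simp
      _ = 1 := by simp
      _ ≤ Real.exp (t ^ 2 * c ^ 2 / 2) := by
          rw [show (1:ℝ) = Real.exp 0 from (Real.exp_zero).symm]
          apply Real.exp_le_exp.2; positivity
  · -- c > 0
    have hc' : c ≠ 0 := ne_of_gt hc
    have key : ∀ ω, Real.exp (t * (g ω - m)) ≤
        Real.cosh (t * c) + (g ω - m) * (Real.sinh (t * c) / c) := by
      intro ω
      set y := g ω - m with hy
      have hyb : |y| ≤ c := hmb ω
      have ha : (0:ℝ) ≤ (c - y) / (2 * c) := by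
        apply div_nonneg _ (by linarith); linarith [abs_le.1 hyb]
      have hb : (0:ℝ) ≤ (c + y) / (2 * c) := by
        apply div_nonneg _ (by linarith); linarith [abs_le.1 hyb]
      have hab : (c - y) / (2 * c) + (c + y) / (2 * c) = 1 := by field_simp; ring
      have hconv := convexOn_exp.2 (Set.mem_univ (-(t * c))) (Set.mem_univ (t * c)) ha hb hab
      have he : ((c - y) / (2 * c)) • (-(t * c)) + ((c + y) / (2 * c)) • (t * c) = t * y := by
        simp only [smul_eq_mul]
        field_simp
        ring
      rw [he] at hconv
      calc Real.exp (t * y) ≤ ((c - y) / (2 * c)) • Real.exp (-(t * c)) +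
            ((c + y) / (2 * c)) • Real.exp (t * c) := hconv
        _ = Real.cosh (t * c) + y * (Real.sinh (t * c) / c) := by
            rw [Real.cosh_eq, Real.sinh_eq]
            simp only [smul_eq_mul]
            field_simp
            ring
    have hintL : Integrable (fun ω => Real.exp (t * (g ω - m))) ν := by
      apply bdd_integrable (Real.measurable_exp.comp
        ((hg.sub_const m).const_mul t)).aestronglyMeasurable (C := Real.exp (|t| * c))
      intro ω
      show |Real.exp (t * (g ω - m))| ≤ Real.exp (|t| * c)
      rw [abs_of_pos (Real.exp_pos _)]
      apply Real.exp_le_exp.2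
      calc t * (g ω - m) ≤ |t * (g ω - m)| := le_abs_self _
        _ = |t| * |g ω - m| := abs_mul _ _
        _ ≤ |t| * c := mul_le_mul_of_nonneg_left (hmb ω) (abs_nonneg t)
    have h2int : Integrable (fun ω => (g ω - m) * (Real.sinh (t * c) / c)) ν := by
      apply bdd_integrable ((hg.sub_const m).mul_const _).aestronglyMeasurable
        (C := c * |Real.sinh (t * c) / c|)
      intro ω
      show |(g ω - m) * (Real.sinh (t * c) / c)| ≤ _
      rw [abs_mul]
      exact mul_le_mul_of_nonneg_right (hmb ω) (abs_nonneg _)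
    have hintR : Integrable (fun ω => Real.cosh (t * c) + (g ω - m) * (Real.sinh (t * c) / c)) ν :=
      (integrable_const _).add h2int
    have hI0 : ∫ ω, (g ω - m) ∂ν = 0 := by
      rw [integral_sub hgint (integrable_const _)]
      simp [← hm]
    calc ∫ ω, Real.exp (t * (g ω - m)) ∂ν
        ≤ ∫ ω, (Real.cosh (t * c) + (g ω - m) * (Real.sinh (t * c) / c)) ∂ν :=
          integral_mono hintL hintR key
      _ = Real.cosh (t * c) + (∫ ω, (g ω - m) ∂ν) * (Real.sinh (t * c) / c) := by
          rw [integral_add (integrable_const _) h2int, integral_mul_const]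
          simp
      _ = Real.cosh (t * c) := by rw [hI0]; ring
      _ ≤ Real.exp ((t * c) ^ 2 / 2) := Real.cosh_le_exp_half_sq _
      _ = Real.exp (t ^ 2 * c ^ 2 / 2) := by rw [mul_pow]

universe u

open scoped Classical in
lemma mcdiarmid_mgf :
    ∀ (n : ℕ) (X : Fin n → Type u) (mX : ∀ i, MeasurableSpace (X i))
      (μ : ∀ i, Measure (X i)) (hP : ∀ i, IsProbabilityMeasure (μ i))
      (D : Fin n → ℝ) (hD0 : ∀ i, 0 ≤ D i)
      (f : (∀ i, X i) → ℝ) (hf : Measurable f) (C : ℝ) (hC : ∀ x, |f x| ≤ C)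
      (hbd : ∀ x y, f x - f y ≤ ∑ i, if x i = y i then 0 else D i) (t : ℝ),
      ∫ x, Real.exp (t * (f x - ∫ y, f y ∂(Measure.pi μ))) ∂(Measure.pi μ) ≤
        Real.exp (t ^ 2 * (∑ i, D i ^ 2) / 2) := by
  intro n
  induction n with
  | zero =>
    intro X mX μ hP D hD0 f hf C hC hbd t
    haveI : ∀ i, IsProbabilityMeasure (μ i) := hP
    haveI : IsProbabilityMeasure (Measure.pi μ) := inferInstance
    have h1 : ∀ x : ∀ i, X i, f x = f (fun i => i.elim0) := fun x =>
      congrArg f (funext fun i => i.elim0)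
    have hint : ∫ y, f y ∂(Measure.pi μ) = f (fun i => i.elim0) := by
      rw [show f = fun _ => f (fun i => i.elim0) from funext h1]
      simp
    calc ∫ x, Real.exp (t * (f x - ∫ y, f y ∂(Measure.pi μ))) ∂(Measure.pi μ)
        = ∫ _x, (1:ℝ) ∂(Measure.pi μ) := by
          apply integral_congr_ae; filter_upwards with x; rw [h1 x, hint]; simp
      _ = 1 := by simp
      _ ≤ Real.exp (t ^ 2 * (∑ i, D i ^ 2) / 2) := by simp
  | succ n ih =>
    intro X mX μ hP D hD0 f hf C hC hbd t
    haveI : ∀ i, IsProbabilityMeasure (μ i) := hP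
    set p : Fin (n + 1) := 0 with hp
    set e := MeasurableEquiv.piFinSuccAbove X p with he
    set π' := Measure.pi (fun j => μ (p.succAbove j)) with hπ'
    haveI : IsProbabilityMeasure (Measure.pi μ) := inferInstance
    haveI : IsProbabilityMeasure π' := by rw [hπ']; infer_instance
    haveI : IsProbabilityMeasure ((μ p).prod π') := inferInstance
    have mp : MeasurePreserving e (Measure.pi μ) ((μ p).prod π') :=
      measurePreserving_piFinSuccAbove μ p
    set m := ∫ y, f y ∂(Measure.pi μ) with hm
    set F : X p × (∀ j, X (p.succAbove j)) → ℝ := fun z => f (e.symm z) with hF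
    have hFmeas : Measurable F := hf.comp e.symm.measurable
    have hFC : ∀ z, |F z| ≤ C := fun z => hC _
    set g : X p → ℝ := fun ξ => ∫ y, F (ξ, y) ∂π' with hg
    have hgmeas : Measurable g := hFmeas.stronglyMeasurable.integral_prod_right'.measurable
    have hgC : ∀ ξ, |g ξ| ≤ C := by
      intro ξ
      have h := norm_integral_le_of_norm_le_const (μ := π') (C := C)
        (f := fun y => F (ξ, y)) (ae_of_all _ fun y => by
          simpa [Real.norm_eq_abs] using hFC (ξ, y))
      simpa [Real.norm_eq_abs, measure_univ] using h
    have hmC : |m| ≤ C := by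
      have h := norm_integral_le_of_norm_le_const (μ := Measure.pi μ) (C := C)
        (f := f) (ae_of_all _ fun y => by simpa [Real.norm_eq_abs] using hC y)
      simpa [Real.norm_eq_abs, measure_univ, ← hm] using h
    -- coordinates of e.symm
    have hco1 : ∀ (ξ : X p) (y : ∀ j, X (p.succAbove j)), (e.symm (ξ, y)) p = ξ := by
      intro ξ y
      simp [he, MeasurableEquiv.piFinSuccAbove_symm_apply]
    have hco2 : ∀ (ξ : X p) (y : ∀ j, X (p.succAbove j)) (j : Fin n),
        (e.symm (ξ, y)) (p.succAbove j) = y j := by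
      intro ξ y j
      simp [he, MeasurableEquiv.piFinSuccAbove_symm_apply]
    have hbd' : ∀ (ξ : X p) (y y' : ∀ j, X (p.succAbove j)),
        F (ξ, y) - F (ξ, y') ≤ ∑ j, if y j = y' j then 0 else D (p.succAbove j) := by
      intro ξ y y'
      refine le_trans (hbd (e.symm (ξ, y)) (e.symm (ξ, y'))) (le_of_eq ?_)
      rw [Fin.sum_univ_succAbove _ p]
      rw [hco1, hco1, if_pos rfl, zero_add]
      apply Finset.sum_congr rfl
      intro j _
      rw [hco2, hco2]
    have hIH : ∀ ξ : X p, ∫ y, Real.exp (t * (F (ξ, y) - g ξ)) ∂π' ≤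
        Real.exp (t ^ 2 * (∑ j, D (p.succAbove j) ^ 2) / 2) := by
      intro ξ
      exact ih (fun j => X (p.succAbove j)) (fun j => mX _) (fun j => μ (p.succAbove j))
        (fun j => hP _) (fun j => D (p.succAbove j)) (fun j => hD0 _)
        (fun y => F (ξ, y)) (hFmeas.comp measurable_prodMk_left) C (fun y => hFC _)
        (hbd' ξ) t
    have hgosc : ∀ ξ ξ', g ξ - g ξ' ≤ D p := by
      intro ξ ξ'
      have hpt : ∀ y, F (ξ, y) - F (ξ', y) ≤ D p := by
        intro y
        refine le_trans (hbd (e.symm (ξ, y)) (e.symm (ξ', y))) ?_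
        rw [Fin.sum_univ_succAbove _ p]
        have h1 : (if (e.symm (ξ, y)) p = (e.symm (ξ', y)) p then (0:ℝ) else D p) ≤ D p := by
          split
          · exact hD0 p
          · exact le_refl _
        have h2 : ∑ j, (if (e.symm (ξ, y)) (p.succAbove j) = (e.symm (ξ', y)) (p.succAbove j)
            then (0:ℝ) else D (p.succAbove j)) = 0 := by
          apply Finset.sum_eq_zero
          intro j _
          rw [hco2, hco2, if_pos rfl]
        rw [h2]
        simpa using h1
      have hFint1 : Integrable (fun y => F (ξ, y)) π' :=
        bdd_integrable (hFmeas.comp measurable_prodMk_left).aestronglyMeasurable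
          (fun y => hFC _)
      have hFint2 : Integrable (fun y => F (ξ', y)) π' :=
        bdd_integrable (hFmeas.comp measurable_prodMk_left).aestronglyMeasurable
          (fun y => hFC _)
      calc g ξ - g ξ' = ∫ y, (F (ξ, y) - F (ξ', y)) ∂π' := (integral_sub hFint1 hFint2).symm
        _ ≤ ∫ _y, D p ∂π' := integral_mono (hFint1.sub hFint2) (integrable_const _) hpt
        _ = D p := by simp
    have hFint : Integrable F ((μ p).prod π') :=
      bdd_integrable hFmeas.aestronglyMeasurable hFC
    have hmF : m = ∫ z, F z ∂((μ p).prod π') := by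
      rw [hm, ← mp.integral_comp e.measurableEmbedding]
      apply integral_congr_ae; filter_upwards with x
      rw [hF]
      simp
    have hgm : ∫ ξ, g ξ ∂(μ p) = m := by
      rw [hmF, integral_prod _ hFint]
    -- integrability of the big integrands
    have hexpb : ∀ z : X p × (∀ j, X (p.succAbove j)), |Real.exp (t * (F z - m))| ≤
        Real.exp (|t| * (2 * C)) := by
      intro z
      rw [abs_of_pos (Real.exp_pos _)]
      apply Real.exp_le_exp.2
      calc t * (F z - m) ≤ |t * (F z - m)| := le_abs_self _
        _ = |t| * |F z - m| := abs_mul _ _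
        _ ≤ |t| * (2 * C) := by
            apply mul_le_mul_of_nonneg_left _ (abs_nonneg t)
            calc |F z - m| ≤ |F z| + |m| := abs_sub _ _
              _ ≤ 2 * C := by linarith [hFC z, hmC]
    have hintProd : Integrable (fun z => Real.exp (t * (F z - m))) ((μ p).prod π') :=
      bdd_integrable (Real.measurable_exp.comp ((hFmeas.sub_const m).const_mul t)).aestronglyMeasurable
        hexpb
    have hH : Measurable fun z : X p × (∀ j, X (p.succAbove j)) =>
        Real.exp (t * (F z - g z.1)) :=
      Real.measurable_exp.comp ((hFmeas.sub (hgmeas.comp measurable_fst)).const_mul t)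
    have hinner_meas : Measurable fun ξ => ∫ y, Real.exp (t * (F (ξ, y) - g ξ)) ∂π' :=
      hH.stronglyMeasurable.integral_prod_right'.measurable
    have hinner_bd : ∀ ξ, |∫ y, Real.exp (t * (F (ξ, y) - g ξ)) ∂π'| ≤
        Real.exp (|t| * (2 * C)) := by
      intro ξ
      have h := norm_integral_le_of_norm_le_const (μ := π') (C := Real.exp (|t| * (2 * C)))
        (f := fun y => Real.exp (t * (F (ξ, y) - g ξ))) (ae_of_all _ fun y => by
          rw [Real.norm_eq_abs, abs_of_pos (Real.exp_pos _)]
          apply Real.exp_le_exp.2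
          calc t * (F (ξ, y) - g ξ) ≤ |t * (F (ξ, y) - g ξ)| := le_abs_self _
            _ = |t| * |F (ξ, y) - g ξ| := abs_mul _ _
            _ ≤ |t| * (2 * C) := by
                apply mul_le_mul_of_nonneg_left _ (abs_nonneg t)
                calc |F (ξ, y) - g ξ| ≤ |F (ξ, y)| + |g ξ| := abs_sub _ _
                  _ ≤ 2 * C := by linarith [hFC (ξ, y), hgC ξ])
      simpa [Real.norm_eq_abs, measure_univ] using h
    have hgexp_bd : ∀ ξ, |Real.exp (t * (g ξ - m))| ≤ Real.exp (|t| * (2 * C)) := by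
      intro ξ
      rw [abs_of_pos (Real.exp_pos _)]
      apply Real.exp_le_exp.2
      calc t * (g ξ - m) ≤ |t * (g ξ - m)| := le_abs_self _
        _ = |t| * |g ξ - m| := abs_mul _ _
        _ ≤ |t| * (2 * C) := by
            apply mul_le_mul_of_nonneg_left _ (abs_nonneg t)
            calc |g ξ - m| ≤ |g ξ| + |m| := abs_sub _ _
              _ ≤ 2 * C := by linarith [hgC ξ, hmC]
    have hgexp_meas : Measurable fun ξ => Real.exp (t * (g ξ - m)) :=
      Real.measurable_exp.comp ((hgmeas.sub_const m).const_mul t)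
    have int1 : Integrable (fun ξ => Real.exp (t * (g ξ - m)) *
        ∫ y, Real.exp (t * (F (ξ, y) - g ξ)) ∂π') (μ p) := by
      apply bdd_integrable (hgexp_meas.mul hinner_meas).aestronglyMeasurable
        (C := Real.exp (|t| * (2 * C)) * Real.exp (|t| * (2 * C)))
      intro ξ
      rw [Pi.mul_apply, abs_mul]
      exact mul_le_mul (hgexp_bd ξ) (hinner_bd ξ) (abs_nonneg _) (Real.exp_pos _).le
    have int2 : Integrable (fun ξ => Real.exp (t * (g ξ - m)) *
        Real.exp (t ^ 2 * (∑ j, D (p.succAbove j) ^ 2) / 2)) (μ p) := by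
      apply bdd_integrable (hgexp_meas.mul_const _).aestronglyMeasurable
        (C := Real.exp (|t| * (2 * C)) * Real.exp (t ^ 2 * (∑ j, D (p.succAbove j) ^ 2) / 2))
      intro ξ
      rw [abs_mul,
        abs_of_pos (Real.exp_pos (t ^ 2 * (∑ j, D (p.succAbove j) ^ 2) / 2))]
      exact mul_le_mul_of_nonneg_right (hgexp_bd ξ) (Real.exp_pos _).le
    calc ∫ x, Real.exp (t * (f x - m)) ∂(Measure.pi μ)
        = ∫ z, Real.exp (t * (F z - m)) ∂((μ p).prod π') := by
          rw [← mp.integral_comp e.measurableEmbedding]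
          apply integral_congr_ae; filter_upwards with x
          rw [hF]
          simp
      _ = ∫ ξ, ∫ y, Real.exp (t * (F (ξ, y) - m)) ∂π' ∂(μ p) := integral_prod _ hintProd
      _ = ∫ ξ, Real.exp (t * (g ξ - m)) * ∫ y, Real.exp (t * (F (ξ, y) - g ξ)) ∂π' ∂(μ p) := by
          apply integral_congr_ae; filter_upwards with ξ
          rw [← integral_const_mul]
          apply integral_congr_ae; filter_upwards with y
          rw [← Real.exp_add]
          congr 1
          ring
      _ ≤ ∫ ξ, Real.exp (t * (g ξ - m)) *
            Real.exp (t ^ 2 * (∑ j, D (p.succAbove j) ^ 2) / 2) ∂(μ p) := by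
          apply integral_mono int1 int2
          intro ξ
          exact mul_le_mul_of_nonneg_left (hIH ξ) (Real.exp_pos _).le
      _ = (∫ ξ, Real.exp (t * (g ξ - m)) ∂(μ p)) *
            Real.exp (t ^ 2 * (∑ j, D (p.succAbove j) ^ 2) / 2) := integral_mul_const _ _
      _ ≤ Real.exp (t ^ 2 * (D p) ^ 2 / 2) *
            Real.exp (t ^ 2 * (∑ j, D (p.succAbove j) ^ 2) / 2) := by
          have h := hoeffding_half (ν := μ p) hgmeas hgosc t
          rw [hgm] at h
          exact mul_le_mul_of_nonneg_right h (Real.exp_pos _).le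
      _ = Real.exp (t ^ 2 * (∑ i, D i ^ 2) / 2) := by
          rw [← Real.exp_add, Fin.sum_univ_succAbove (fun i => D i ^ 2) p]
          congr 1
          ring

set_option maxHeartbeats 1000000 in
/-- Concentration function bound for a product of mm-spaces of finite diameters with the
ℓ¹-distance: for every Borel set `A` of measure at least `1/2` and every `r > 0`, the
complement of the open ℓ¹ `r`-neighborhood of `A` has measure at most `exp(−r²/(8D²))`,
where `D² = Σᵢ Dᵢ²`; i.e. `α_X(r) ≤ exp(−r²/(8D²))`. -/
theorem product_space_concentration_function
    {n : ℕ} {X : Fin n → Type*} [∀ i, MetricSpace (X i)] [∀ i, MeasurableSpace (X i)]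
    [∀ i, BorelSpace (X i)] [∀ i, SecondCountableTopology (X i)]
    (μ : ∀ i, Measure (X i)) [∀ i, IsProbabilityMeasure (μ i)]
    (D : Fin n → ℝ)
    (hD : ∀ i, EMetric.diam (Set.univ : Set (X i)) ≤ ENNReal.ofReal (D i))
    (r : ℝ) (hr : 0 < r)
    (A : Set (∀ i, X i)) (hA : MeasurableSet A)
    (hAhalf : 1/2 ≤ ((Measure.pi μ) A).toReal) :
    ((Measure.pi μ) {x | ∀ a ∈ A, r ≤ ∑ i, dist (x i) (a i)}).toReal ≤
      Real.exp (-(r ^ 2) / (8 * ∑ i, D i ^ 2)) := by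
  classical
  haveI : IsProbabilityMeasure (Measure.pi μ) := inferInstance
  set Pm := Measure.pi μ with hPm
  -- A is nonempty
  have hAne : A.Nonempty := by
    rw [Set.nonempty_iff_ne_empty]
    intro h
    rw [h] at hAhalf
    simp at hAhalf
    linarith
  -- adjusted diameters
  set D' : Fin n → ℝ := fun i => max (D i) 0 with hD'
  have hD'0 : ∀ i, 0 ≤ D' i := fun i => le_max_right _ _
  have hdist : ∀ (i : Fin n) (u v : X i), dist u v ≤ D' i := by
    intro i u v
    have h1 : edist u v ≤ ENNReal.ofReal (D' i) :=
      le_trans (EMetric.edist_le_diam_of_mem (Set.mem_univ u) (Set.mem_univ v))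
        (le_trans (hD i) (ENNReal.ofReal_le_ofReal (le_max_left _ _)))
    have h2 : dist u v = (edist u v).toReal := by
      rw [edist_dist, ENNReal.toReal_ofReal dist_nonneg]
    calc dist u v = (edist u v).toReal := h2
      _ ≤ (ENNReal.ofReal (D' i)).toReal := ENNReal.toReal_mono ENNReal.ofReal_ne_top h1
      _ = D' i := ENNReal.toReal_ofReal (hD'0 i)
  -- the ℓ¹ distance-to-A function
  set f := fun x : ∀ i, X i => sInf ((fun a => ∑ i, dist (x i) (a i)) '' A) with hfdef
  have hbddA : ∀ x : ∀ i, X i, BddBelow ((fun a => ∑ i, dist (x i) (a i)) '' A) := by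
    intro x
    refine ⟨0, ?_⟩
    rintro b ⟨a, _, rfl⟩
    exact Finset.sum_nonneg fun i _ => dist_nonneg
  have hf0 : ∀ x, 0 ≤ f x := by
    intro x
    apply le_csInf (hAne.image _)
    rintro b ⟨a, _, rfl⟩
    exact Finset.sum_nonneg fun i _ => dist_nonneg
  have hfA : ∀ a ∈ A, f a = 0 := by
    intro a ha
    refine le_antisymm ?_ (hf0 a)
    refine csInf_le (hbddA a) ⟨a, ha, ?_⟩
    simp
  have hflip : ∀ x y, f x - f y ≤ ∑ i, dist (x i) (y i) := by
    intro x y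
    have h : f x - (∑ i, dist (x i) (y i)) ≤ f y := by
      apply le_csInf (hAne.image _)
      rintro b ⟨a, ha, rfl⟩
      have h1 : f x ≤ ∑ i, dist (x i) (a i) := csInf_le (hbddA x) ⟨a, ha, rfl⟩
      have h2 : ∑ i, dist (x i) (a i) ≤ ∑ i, (dist (x i) (y i) + dist (y i) (a i)) :=
        Finset.sum_le_sum fun i _ => dist_triangle _ _ _
      rw [Finset.sum_add_distrib] at h2
      linarith
    linarith
  have hbd : ∀ x y, f x - f y ≤ ∑ i, if x i = y i then 0 else D' i := by
    intro x y
    refine le_trans (hflip x y) (Finset.sum_le_sum fun i _ => ?_)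
    split
    · next h => rw [h, dist_self]
    · exact hdist i _ _
  have hfmeas : Measurable f := by
    have hlip : LipschitzWith n f := by
      apply LipschitzWith.of_dist_le_mul
      intro x y
      rw [Real.dist_eq, abs_le]
      constructor
      · have := hflip y x
        have heq : ∑ i, dist (y i) (x i) = ∑ i, dist (x i) (y i) :=
          Finset.sum_congr rfl fun i _ => dist_comm _ _
        rw [heq] at this
        have h2 : ∑ i, dist (x i) (y i) ≤ (n : ℝ) * dist x y := by
          calc ∑ i, dist (x i) (y i) ≤ ∑ _i : Fin n, dist x y :=
              Finset.sum_le_sum fun i _ => dist_le_pi_dist x y i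
            _ = (n : ℝ) * dist x y := by
              rw [Finset.sum_const, Finset.card_univ, Fintype.card_fin, nsmul_eq_mul]
        simp only [NNReal.coe_natCast]
        linarith
      · have := hflip x y
        have h2 : ∑ i, dist (x i) (y i) ≤ (n : ℝ) * dist x y := by
          calc ∑ i, dist (x i) (y i) ≤ ∑ _i : Fin n, dist x y :=
              Finset.sum_le_sum fun i _ => dist_le_pi_dist x y i
            _ = (n : ℝ) * dist x y := by
              rw [Finset.sum_const, Finset.card_univ, Fintype.card_fin, nsmul_eq_mul]
        simp only [NNReal.coe_natCast]
        linarith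
    exact hlip.continuous.measurable
  set C : ℝ := ∑ i, D' i with hCdef
  have hfC : ∀ x, |f x| ≤ C := by
    intro x
    obtain ⟨a₀, ha₀⟩ := hAne
    rw [abs_of_nonneg (hf0 x)]
    calc f x ≤ ∑ i, dist (x i) (a₀ i) := csInf_le (hbddA x) ⟨a₀, ha₀, rfl⟩
      _ ≤ C := Finset.sum_le_sum fun i _ => hdist i _ _
  set S' : ℝ := ∑ i, D' i ^ 2 with hS'def
  have hS'nonneg : 0 ≤ S' := Finset.sum_nonneg fun i _ => sq_nonneg _
  by_cases hS' : S' = 0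
  · -- degenerate case : all diameters zero, the bad set is empty
    have hD'z : ∀ i, D' i = 0 := by
      intro i
      have h2 := (Finset.sum_eq_zero_iff_of_nonneg fun j (_ : j ∈ Finset.univ) =>
        sq_nonneg (D' j)).1 hS' i (Finset.mem_univ i)
      exact pow_eq_zero_iff two_ne_zero |>.1 h2
    obtain ⟨a₀, ha₀⟩ := hAne
    have hbad : {x : ∀ i, X i | ∀ a ∈ A, r ≤ ∑ i, dist (x i) (a i)} = ∅ := by
      ext x
      simp only [Set.mem_setOf_eq, Set.mem_empty_iff_false, iff_false, not_forall]
      push_neg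
      refine ⟨a₀, ha₀, ?_⟩
      have h : ∑ i, dist (x i) (a₀ i) ≤ 0 := by
        apply Finset.sum_nonpos
        intro i _
        rw [← hD'z i]
        exact hdist i _ _
      linarith
    rw [hbad]
    simp only [measure_empty, ENNReal.toReal_zero]
    exact (Real.exp_pos _).le
  · have hS'pos : 0 < S' := lt_of_le_of_ne hS'nonneg (Ne.symm hS')
    set m : ℝ := ∫ y, f y ∂Pm with hmdef
    have hm0 : 0 ≤ m := integral_nonneg hf0
    have hint : ∀ t : ℝ, Integrable (fun ω => Real.exp (t * f ω)) Pm := by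
      intro t
      apply bdd_integrable (Real.measurable_exp.comp (hfmeas.const_mul t)).aestronglyMeasurable
        (C := Real.exp (|t| * C))
      intro ω
      show |Real.exp (t * f ω)| ≤ Real.exp (|t| * C)
      rw [abs_of_pos (Real.exp_pos _)]
      apply Real.exp_le_exp.2
      calc t * f ω ≤ |t * f ω| := le_abs_self _
        _ = |t| * |f ω| := abs_mul _ _
        _ ≤ |t| * C := mul_le_mul_of_nonneg_left (hfC ω) (abs_nonneg t)
    have hmgf : ∀ t : ℝ, mgf f Pm t ≤ Real.exp (t * m + t ^ 2 * S' / 2) := by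
      intro t
      have h := mcdiarmid_mgf n X (fun i => inferInstance) μ (fun i => inferInstance) D' hD'0 f hfmeas C hfC hbd t
      calc mgf f Pm t = Real.exp (t * m) * ∫ x, Real.exp (t * (f x - m)) ∂Pm := by
            rw [← integral_const_mul]
            unfold ProbabilityTheory.mgf
            apply integral_congr_ae; filter_upwards with x
            rw [← Real.exp_add]
            congr 1
            ring
        _ ≤ Real.exp (t * m) * Real.exp (t ^ 2 * S' / 2) :=
            mul_le_mul_of_nonneg_left h (Real.exp_pos _).le
        _ = Real.exp (t * m + t ^ 2 * S' / 2) := (Real.exp_add _ _).symm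
    -- lower tail : bound on the mean
    have hm2 : m ^ 2 ≤ 2 * S' * Real.log 2 := by
      set t₀ : ℝ := -(m / S') with ht₀
      have ht₀le : t₀ ≤ 0 := by
        rw [ht₀, neg_nonpos]
        positivity
      have h1 := measure_le_le_exp_mul_mgf (X := f) (μ := Pm) 0 ht₀le (hint t₀)
      have hAsub : A ⊆ {x | f x ≤ 0} := fun a ha => le_of_eq (hfA a ha)
      have h2 : (1:ℝ)/2 ≤ (Pm {x | f x ≤ 0}).toReal :=
        le_trans hAhalf (ENNReal.toReal_mono (measure_ne_top _ _) (measure_mono hAsub))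
      have h3 : (1:ℝ)/2 ≤ Real.exp (-(m ^ 2) / (2 * S')) := by
        have h4 : t₀ * m + t₀ ^ 2 * S' / 2 = -(m ^ 2) / (2 * S') := by
          rw [ht₀]
          field_simp
          ring
        calc (1:ℝ)/2 ≤ (Pm {x | f x ≤ 0}).toReal := h2
          _ ≤ Real.exp (-t₀ * 0) * mgf f Pm t₀ := h1
          _ = mgf f Pm t₀ := by simp
          _ ≤ Real.exp (t₀ * m + t₀ ^ 2 * S' / 2) := hmgf t₀
          _ = Real.exp (-(m ^ 2) / (2 * S')) := by rw [h4]
      have h5 : -(Real.log 2) ≤ -(m ^ 2) / (2 * S') := by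
        apply Real.exp_le_exp.1
        rw [Real.exp_neg, Real.exp_log two_pos]
        calc (2:ℝ)⁻¹ = 1/2 := by norm_num
          _ ≤ _ := h3
      have h6 : m ^ 2 / (2 * S') ≤ Real.log 2 := by
        rw [neg_div] at h5
        linarith
      calc m ^ 2 = m ^ 2 / (2 * S') * (2 * S') := by field_simp
        _ ≤ Real.log 2 * (2 * S') := mul_le_mul_of_nonneg_right h6 (by positivity)
        _ = 2 * S' * Real.log 2 := by ring
    -- upper tail
    have hsub : {x : ∀ i, X i | ∀ a ∈ A, r ≤ ∑ i, dist (x i) (a i)} ⊆ {x | r ≤ f x} := by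
      intro x hx
      simp only [Set.mem_setOf_eq] at hx ⊢
      apply le_csInf (hAne.image _)
      rintro b ⟨a, ha, rfl⟩
      exact hx a ha
    have hstep : (Pm {x : ∀ i, X i | ∀ a ∈ A, r ≤ ∑ i, dist (x i) (a i)}).toReal ≤
        Real.exp (-(r ^ 2) / (8 * S')) := by
      rcases le_or_gt (2 * m) r with hcase | hcase
      · set t : ℝ := (r - m) / S' with ht
        have ht0 : 0 ≤ t := by
          apply div_nonneg _ hS'nonneg
          linarith
        have h1 := measure_ge_le_exp_mul_mgf (X := f) (μ := Pm) r ht0 (hint t)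
        have h2 : (Pm {x | r ≤ f x}).toReal ≤ Real.exp (-t * r + (t * m + t ^ 2 * S' / 2)) := by
          calc (Pm {x | r ≤ f x}).toReal ≤ Real.exp (-t * r) * mgf f Pm t := h1
            _ ≤ Real.exp (-t * r) * Real.exp (t * m + t ^ 2 * S' / 2) :=
                mul_le_mul_of_nonneg_left (hmgf t) (Real.exp_pos _).le
            _ = Real.exp (-t * r + (t * m + t ^ 2 * S' / 2)) := (Real.exp_add _ _).symm
        have h3 : -t * r + (t * m + t ^ 2 * S' / 2) = -((r - m) ^ 2) / (2 * S') := by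
          rw [ht]
          field_simp
          ring
        have h4 : -((r - m) ^ 2) / (2 * S') ≤ -(r ^ 2) / (8 * S') := by
          rw [div_le_div_iff₀ (by positivity) (by positivity)]
          nlinarith [mul_nonneg (mul_nonneg (by linarith : (0:ℝ) ≤ 3 * r - 2 * m)
            (by linarith : (0:ℝ) ≤ r - 2 * m)) hS'pos.le]
        calc (Pm {x : ∀ i, X i | ∀ a ∈ A, r ≤ ∑ i, dist (x i) (a i)}).toReal
            ≤ (Pm {x | r ≤ f x}).toReal :=
              ENNReal.toReal_mono (measure_ne_top _ _) (measure_mono hsub)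
          _ ≤ Real.exp (-t * r + (t * m + t ^ 2 * S' / 2)) := h2
          _ = Real.exp (-((r - m) ^ 2) / (2 * S')) := by rw [h3]
          _ ≤ Real.exp (-(r ^ 2) / (8 * S')) := Real.exp_le_exp.2 h4
      · -- r < 2 m : trivial bound by 1/2
        have hr2 : r ^ 2 < 8 * S' * Real.log 2 := by nlinarith [hm2, hr, hcase, hm0]
        have hhalf : (1:ℝ) / 2 ≤ Real.exp (-(r ^ 2) / (8 * S')) := by
          have h5 : -(Real.log 2) ≤ -(r ^ 2) / (8 * S') := by
            rw [neg_div, neg_le_neg_iff, div_le_iff₀ (by positivity)]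
            nlinarith [hr2]
          calc (1:ℝ)/2 = Real.exp (-(Real.log 2)) := by
                rw [Real.exp_neg, Real.exp_log two_pos]
                norm_num
            _ ≤ _ := Real.exp_le_exp.2 h5
        have hdisj : Disjoint {x : ∀ i, X i | ∀ a ∈ A, r ≤ ∑ i, dist (x i) (a i)} A := by
          rw [Set.disjoint_left]
          intro x hx hxA
          have h := hx x hxA
          simp only [dist_self, Finset.sum_const, smul_zero] at h
          linarith
        have hm12 : (Pm {x : ∀ i, X i | ∀ a ∈ A, r ≤ ∑ i, dist (x i) (a i)}).toReal ≤ 1/2 := by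
          have h1 : Pm ({x : ∀ i, X i | ∀ a ∈ A, r ≤ ∑ i, dist (x i) (a i)} ∪ A) =
              Pm {x : ∀ i, X i | ∀ a ∈ A, r ≤ ∑ i, dist (x i) (a i)} + Pm A :=
            measure_union hdisj hA
          have h2 : Pm ({x : ∀ i, X i | ∀ a ∈ A, r ≤ ∑ i, dist (x i) (a i)} ∪ A) ≤ 1 :=
            prob_le_one
          rw [h1] at h2
          have h3 := ENNReal.toReal_mono ENNReal.one_ne_top h2
          rw [ENNReal.toReal_add (measure_ne_top _ _) (measure_ne_top _ _)] at h3
          simp only [ENNReal.toReal_one] at h3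
          linarith
        exact le_trans hm12 hhalf
    have hS'le : S' ≤ ∑ i, D i ^ 2 := by
      apply Finset.sum_le_sum
      intro i _
      rcases le_total (D i) 0 with h | h
      · have h0 : D' i = 0 := max_eq_right h
        rw [h0]
        simpa using sq_nonneg (D i)
      · have : D' i = D i := max_eq_left h
        rw [this]
    have hfinal : Real.exp (-(r ^ 2) / (8 * S')) ≤ Real.exp (-(r ^ 2) / (8 * ∑ i, D i ^ 2)) := by
      apply Real.exp_le_exp.2
      rw [neg_div, neg_div, neg_le_neg_iff]
      have h8 : (0:ℝ) < 8 * S' := by positivity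
      have h8' : 8 * S' ≤ 8 * ∑ i, D i ^ 2 := by linarith
      exact div_le_div_of_nonneg_left (by positivity) h8 h8'
    exact le_trans hstep hfinal
end

section
/- Let (Yᵢ) be i.i.d. random variables on a probability space (Ω, Σ, ℙ) with values in an ℝ-tree T, and assume Supp((Y₁)_*ℙ) has diameter at most D. Let aₙ := d_T(E(sₙ), b(ν)) where ν = (Y₁)_*ℙ, sₙ is the inductive-mean map on Tⁿ, and b(ν) the barycenter of ν. Then aₙ² ≤ 4D²/n. -/
open MeasureTheory Metric

/-- An ℝ-tree: a geodesic space (completeness is imposed separately) in which the image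
of every simple path is the image of a geodesic. -/
def IsRTree (T : Type*) [MetricSpace T] : Prop :=
  GeodesicSpace T ∧ ∀ f : ℝ → T, ContinuousOn f (Set.Icc 0 1) →
    Set.InjOn f (Set.Icc 0 1) →
    ∃ γ : ℝ → T, IsGeodesic γ ∧ f '' Set.Icc 0 1 = γ '' Set.Icc 0 1

/-- The support of a Borel measure on a metric space. -/
def msupport {N : Type*} [MetricSpace N] [MeasurableSpace N] (ν : Measure N) : Set N :=
  {x | ∀ ε > 0, 0 < ν (Metric.ball x ε)}

open Set

section Geo
variable {T : Type*} [MetricSpace T]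

lemma IsGeodesic.continuousOn {γ : ℝ → T} (h : IsGeodesic γ) :
    ContinuousOn γ (Icc 0 1) := by
  refine (LipschitzOnWith.of_dist_le_mul (K := Real.toNNReal (dist (γ 0) (γ 1)))
    fun s hs t ht => ?_).continuousOn
  rw [h s hs t ht, Real.dist_eq, mul_comm]
  have h1 : dist (γ 0) (γ 1) ≤ (Real.toNNReal (dist (γ 0) (γ 1)) : ℝ) :=
    Real.le_coe_toNNReal _
  have h2 : (0:ℝ) ≤ |s - t| := abs_nonneg _
  nlinarith

lemma IsGeodesic.dist_zero {γ : ℝ → T} (h : IsGeodesic γ) {t : ℝ}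
    (ht : t ∈ Icc (0:ℝ) 1) : dist (γ 0) (γ t) = t * dist (γ 0) (γ 1) := by
  rw [h 0 (by constructor <;> norm_num) t ht, abs_of_nonpos (by linarith [ht.1]),
    neg_sub, sub_zero]

lemma IsGeodesic.dist_one {γ : ℝ → T} (h : IsGeodesic γ) {t : ℝ}
    (ht : t ∈ Icc (0:ℝ) 1) : dist (γ 1) (γ t) = (1 - t) * dist (γ 0) (γ 1) := by
  rw [h 1 (by constructor <;> norm_num) t ht, abs_of_nonneg (by linarith [ht.2])]

/-- concatenation lemma: if a geodesic from `z` to `q` only meets a geodesic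
from `q` to `x` at `q`, then `q` lies between `z` and `x`. -/
lemma dist_concat (hT : IsRTree T) {z q x : T} {σ τ : ℝ → T}
    (hσ : IsGeodesic σ) (hτ : IsGeodesic τ)
    (hσ0 : σ 0 = z) (hσ1 : σ 1 = q) (hτ0 : τ 0 = q) (hτ1 : τ 1 = x)
    (hzq : z ≠ q) (hqx : q ≠ x)
    (hsep : ∀ s ∈ Ico (0:ℝ) 1, ∀ t ∈ Icc (0:ℝ) 1, σ s ≠ τ t) :
    dist z x = dist z q + dist q x := by
  have hdzq : 0 < dist z q := dist_pos.2 hzq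
  have hdqx : 0 < dist q x := dist_pos.2 hqx
  set f : ℝ → T := fun r => if r ≤ 1/2 then σ (2*r) else τ (2*r - 1) with hf
  have hmem1 : ∀ r : ℝ, r ∈ Icc (0:ℝ) 1 → r ≤ 1/2 → (2*r) ∈ Icc (0:ℝ) 1 := by
    intro r hr h2; exact ⟨by linarith [hr.1], by linarith⟩
  have hmem2 : ∀ r : ℝ, r ∈ Icc (0:ℝ) 1 → 1/2 ≤ r → (2*r - 1) ∈ Icc (0:ℝ) 1 := by
    intro r hr h2; exact ⟨by linarith, by linarith [hr.2]⟩
  have hσd : dist (σ 0) (σ 1) = dist z q := by rw [hσ0, hσ1]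
  have hτd : dist (τ 0) (τ 1) = dist q x := by rw [hτ0, hτ1]
  -- f is Lipschitz on Icc 0 1
  have hflip : ∀ r ∈ Icc (0:ℝ) 1, ∀ r' ∈ Icc (0:ℝ) 1,
      dist (f r) (f r') ≤ (2 * max (dist z q) (dist q x)) * |r - r'| := by
    have key : ∀ r ∈ Icc (0:ℝ) 1, ∀ r' ∈ Icc (0:ℝ) 1, r ≤ r' →
        dist (f r) (f r') ≤ (2 * max (dist z q) (dist q x)) * |r - r'| := by
      intro r hr r' hr' hle
      have habs : |r - r'| = r' - r := by rw [abs_sub_comm]; exact abs_of_nonneg (by linarith)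
      by_cases h1 : r ≤ 1/2 <;> by_cases h2 : r' ≤ 1/2
      · simp only [hf, if_pos h1, if_pos h2]
        rw [hσ _ (hmem1 r hr h1) _ (hmem1 r' hr' h2), hσd, habs]
        have : |2*r - 2*r'| = 2*(r' - r) := by rw [abs_sub_comm]; rw [abs_of_nonneg] <;> linarith
        rw [this]
        have := le_max_left (dist z q) (dist q x)
        nlinarith
      · simp only [hf, if_pos h1, if_neg h2]
        have h2' : (1:ℝ)/2 ≤ r' := by linarith
        calc dist (σ (2*r)) (τ (2*r'-1)) ≤ dist (σ (2*r)) (σ 1) + dist (τ 0) (τ (2*r'-1)) := by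
              rw [hσ1, hτ0]; exact dist_triangle _ q _
          _ = (1 - 2*r) * dist z q + (2*r'-1) * dist q x := by
              rw [dist_comm (σ (2*r)), hσ.dist_one (hmem1 r hr h1), hσd,
                hτ.dist_zero (hmem2 r' hr' h2'), hτd]
          _ ≤ (2 * max (dist z q) (dist q x)) * |r - r'| := by
              rw [habs]
              have l1 := le_max_left (dist z q) (dist q x)
              have l2 := le_max_right (dist z q) (dist q x)
              nlinarith [hr.1, hr'.2]
      · linarith
      · simp only [hf, if_neg h1, if_neg h2]
        have h1' : (1:ℝ)/2 ≤ r := by linarith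
        rw [hτ _ (hmem2 r hr h1') _ (hmem2 r' hr' (by linarith)), hτd, habs]
        have : |2*r - 1 - (2*r'-1)| = 2*(r' - r) := by
          rw [show (2*r - 1 - (2*r'-1)) = 2*r - 2*r' by ring, abs_sub_comm, abs_of_nonneg] <;>
            linarith
        rw [this]
        have := le_max_right (dist z q) (dist q x)
        nlinarith
    intro r hr r' hr'
    rcases le_total r r' with h | h
    · exact key r hr r' hr' h
    · rw [dist_comm, abs_sub_comm]; exact key r' hr' r hr h
  have hcont : ContinuousOn f (Icc 0 1) := by
    refine (LipschitzOnWith.of_dist_le_mul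
      (K := Real.toNNReal (2 * max (dist z q) (dist q x))) fun r hr r' hr' => ?_).continuousOn
    calc dist (f r) (f r') ≤ (2 * max (dist z q) (dist q x)) * |r - r'| := hflip r hr r' hr'
      _ ≤ (Real.toNNReal (2 * max (dist z q) (dist q x)) : ℝ) * dist r r' := by
          rw [Real.dist_eq]
          have h1 : (2 * max (dist z q) (dist q x)) ≤
              (Real.toNNReal (2 * max (dist z q) (dist q x)) : ℝ) := Real.le_coe_toNNReal _
          have h2 : (0:ℝ) ≤ |r - r'| := abs_nonneg _
          nlinarith
  have hinj : InjOn f (Icc 0 1) := by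
    have keyinj : ∀ r ∈ Icc (0:ℝ) 1, ∀ r' ∈ Icc (0:ℝ) 1, r ≤ r' → f r = f r' → r = r' := by
      intro r hr r' hr' hle heq
      by_cases h1 : r ≤ 1/2 <;> by_cases h2 : r' ≤ 1/2
      · simp only [hf, if_pos h1, if_pos h2] at heq
        have := hσ _ (hmem1 r hr h1) _ (hmem1 r' hr' h2)
        rw [heq, dist_self, hσd] at this
        have habs : |2*r - 2*r'| = 0 := by
          by_contra hc
          have : 0 < |2*r - 2*r'| := lt_of_le_of_ne (abs_nonneg _) (Ne.symm hc)
          nlinarith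
        have : 2*r - 2*r' = 0 := abs_eq_zero.1 habs
        linarith
      · exfalso
        simp only [hf, if_pos h1, if_neg h2] at heq
        rcases lt_or_eq_of_le h1 with hlt | heq1
        · exact hsep (2*r) ⟨by linarith [hr.1], by linarith⟩ (2*r'-1)
            (hmem2 r' hr' (by linarith)) heq
        · -- r = 1/2, so σ (2r) = q = τ 0; injectivity of τ gives 2r'-1 = 0, contra
          have h2r : (2:ℝ)*r = 1 := by rw [heq1]; norm_num
          rw [h2r, hσ1, ← hτ0] at heq
          have := hτ 0 (by constructor <;> norm_num) _ (hmem2 r' hr' (by linarith))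
          rw [← heq, dist_self, hτd] at this
          have habs : |0 - (2*r'-1)| = 0 := by
            by_contra hc
            have : 0 < |0 - (2*r'-1)| := lt_of_le_of_ne (abs_nonneg _) (Ne.symm hc)
            nlinarith
          have : 0 - (2*r'-1) = 0 := abs_eq_zero.1 habs
          linarith
      · linarith
      · simp only [hf, if_neg h1, if_neg h2] at heq
        have := hτ _ (hmem2 r hr (by linarith)) _ (hmem2 r' hr' (by linarith))
        rw [heq, dist_self, hτd] at this
        have habs : |2*r - 1 - (2*r'-1)| = 0 := by
          by_contra hc
          have : 0 < |2*r - 1 - (2*r'-1)| := lt_of_le_of_ne (abs_nonneg _) (Ne.symm hc)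
          nlinarith
        have : 2*r - 1 - (2*r'-1) = 0 := abs_eq_zero.1 habs
        linarith
    intro r hr r' hr' heq
    rcases le_total r r' with h | h
    · exact keyinj r hr r' hr' h heq
    · exact (keyinj r' hr' r hr h heq.symm).symm
  obtain ⟨γ', hγ', himg⟩ := hT.2 f hcont hinj
  have hzA : z ∈ f '' Icc 0 1 := ⟨0, by constructor <;> norm_num,
    by simp only [hf]; rw [if_pos (by norm_num), mul_zero, hσ0]⟩
  have hqA : q ∈ f '' Icc 0 1 := ⟨1/2, by constructor <;> norm_num,
    by simp only [hf]; rw [if_pos le_rfl]; norm_num [hσ1]⟩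
  have hxA : x ∈ f '' Icc 0 1 := ⟨1, by constructor <;> norm_num,
    by simp only [hf]; rw [if_neg (by norm_num)]; norm_num [hτ1]⟩
  set ℓ := dist (γ' 0) (γ' 1) with hℓ
  -- ℓ > 0
  obtain ⟨sz, hsz, hsz'⟩ := himg ▸ hzA
  obtain ⟨sq, hsq, hsq'⟩ := himg ▸ hqA
  obtain ⟨sx, hsx, hsx'⟩ := himg ▸ hxA
  have hℓpos : 0 < ℓ := by
    by_contra hc
    push_neg at hc
    have h0 : ℓ = 0 := le_antisymm hc dist_nonneg
    have := hγ' sz hsz sq hsq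
    rw [hsz', hsq', ← hℓ, h0, mul_zero] at this
    exact hzq (dist_eq_zero.1 this)
  set ρ : T → ℝ := fun a => dist (γ' 0) a / ℓ with hρ
  have hρval : ∀ s ∈ Icc (0:ℝ) 1, ρ (γ' s) = s := by
    intro s hs
    simp only [hρ]
    rw [hγ'.dist_zero hs, ← hℓ, mul_div_assoc, div_self (ne_of_gt hℓpos), mul_one]
  have hρdist : ∀ a ∈ f '' Icc 0 1, ∀ b ∈ f '' Icc 0 1,
      dist a b = |ρ a - ρ b| * ℓ := by
    intro a ha b hbmem
    obtain ⟨sa, hsa, hsa'⟩ := himg ▸ ha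
    obtain ⟨sb, hsb, hsb'⟩ := himg ▸ hbmem
    rw [← hsa', ← hsb', hγ' sa hsa sb hsb, hρval sa hsa, hρval sb hsb, ← hℓ]
  have hρcont : Continuous ρ := (continuous_const.dist continuous_id).div_const ℓ
  set I1 := (ρ ∘ f) '' Icc (0:ℝ) (1/2) with hI1
  set I2 := (ρ ∘ f) '' Icc (1/2:ℝ) 1 with hI2
  have hsub1 : Icc (0:ℝ) (1/2) ⊆ Icc 0 1 := Icc_subset_Icc le_rfl (by norm_num)
  have hsub2 : Icc (1/2:ℝ) 1 ⊆ Icc 0 1 := Icc_subset_Icc (by norm_num) le_rfl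
  have hc1 : IsPreconnected I1 := (isPreconnected_Icc).image _
    (hρcont.comp_continuousOn (hcont.mono hsub1))
  have hc2 : IsPreconnected I2 := (isPreconnected_Icc).image _
    (hρcont.comp_continuousOn (hcont.mono hsub2))
  have hzI1 : ρ z ∈ I1 := ⟨0, by constructor <;> norm_num,
    by simp only [Function.comp]; congr 1; simp only [hf]; rw [if_pos (by norm_num), mul_zero, hσ0]⟩
  have hqI1 : ρ q ∈ I1 := ⟨1/2, by constructor <;> norm_num,
    by simp only [Function.comp]; congr 1; simp only [hf]; rw [if_pos le_rfl]; norm_num [hσ1]⟩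
  have hqI2 : ρ q ∈ I2 := ⟨1/2, by constructor <;> norm_num,
    by simp only [Function.comp]; congr 1; simp only [hf]; rw [if_pos le_rfl]; norm_num [hσ1]⟩
  have hxI2 : ρ x ∈ I2 := ⟨1, by constructor <;> norm_num,
    by simp only [Function.comp]; congr 1; simp only [hf]; rw [if_neg (by norm_num)]; norm_num [hτ1]⟩
  -- injectivity of ρ on the image
  have hρinj : ∀ a ∈ f '' Icc 0 1, ∀ b ∈ f '' Icc 0 1, ρ a = ρ b → a = b := by
    intro a ha b hbm heq
    have := hρdist a ha b hbm
    rw [heq, sub_self, abs_zero, zero_mul] at this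
    exact dist_eq_zero.1 this
  have hinter : I1 ∩ I2 ⊆ {ρ q} := by
    rintro v ⟨⟨r1, hr1, hv1⟩, ⟨r2, hr2, hv2⟩⟩
    have hfr : f r1 = f r2 := hρinj _ (mem_image_of_mem f (hsub1 hr1)) _
      (mem_image_of_mem f (hsub2 hr2)) (hv1.trans hv2.symm)
    have hrr : r1 = r2 := hinj (hsub1 hr1) (hsub2 hr2) hfr
    have hr12 : r1 = 1/2 := le_antisymm hr1.2 (hrr ▸ hr2.1)
    have hfq : f r1 = q := by
      rw [hr12]; simp only [hf]; rw [if_pos le_rfl]; norm_num [hσ1]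
    have : v = ρ q := by rw [← hv1, Function.comp_apply, hfq]
    simp [this]
  have hzρq : ρ z ≠ ρ q := by
    intro hc
    exact hzq (hρinj _ hzA _ hqA hc)
  have hxρq : ρ x ≠ ρ q := by
    intro hc
    exact hqx (hρinj _ hxA _ hqA hc).symm
  -- betweenness
  have hbetween : min (ρ z) (ρ x) ≤ ρ q ∧ ρ q ≤ max (ρ z) (ρ x) := by
    constructor
    · by_contra hc
      push_neg at hc
      set v := (ρ q + min (ρ z) (ρ x)) / 2 with hv
      have h1 : ρ q < v := by
        simp only [hv]; linarith
      have h2 : v < min (ρ z) (ρ x) := by simp only [hv]; linarith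
      have hvI1 : v ∈ I1 := hc1.ordConnected.out hqI1 hzI1
        ⟨le_of_lt h1, le_of_lt (lt_of_lt_of_le h2 (min_le_left _ _))⟩
      have hvI2 : v ∈ I2 := hc2.ordConnected.out hqI2 hxI2
        ⟨le_of_lt h1, le_of_lt (lt_of_lt_of_le h2 (min_le_right _ _))⟩
      have := hinter ⟨hvI1, hvI2⟩
      simp only [mem_singleton_iff] at this
      linarith
    · by_contra hc
      push_neg at hc
      set v := (ρ q + max (ρ z) (ρ x)) / 2 with hv
      have h1 : v < ρ q := by simp only [hv]; linarith
      have h2 : max (ρ z) (ρ x) < v := by simp only [hv]; linarith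
      have hvI1 : v ∈ I1 := hc1.ordConnected.out hzI1 hqI1
        ⟨le_of_lt (lt_of_le_of_lt (le_max_left _ _) h2), le_of_lt h1⟩
      have hvI2 : v ∈ I2 := hc2.ordConnected.out hxI2 hqI2
        ⟨le_of_lt (lt_of_le_of_lt (le_max_right _ _) h2), le_of_lt h1⟩
      have := hinter ⟨hvI1, hvI2⟩
      simp only [mem_singleton_iff] at this
      linarith
  rw [hρdist z hzA x hxA, hρdist z hzA q hqA, hρdist q hqA x hxA]
  have habs : |ρ z - ρ x| = |ρ z - ρ q| + |ρ q - ρ x| := by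
    rcases le_total (ρ z) (ρ x) with h | h
    · have h1 : min (ρ z) (ρ x) = ρ z := min_eq_left h
      have h2 : max (ρ z) (ρ x) = ρ x := max_eq_right h
      rw [h1] at hbetween; rw [h2] at hbetween
      rw [abs_of_nonpos (by linarith [hbetween.1, hbetween.2]),
        abs_of_nonpos (by linarith [hbetween.1]), abs_of_nonpos (by linarith [hbetween.2])]
      ring
    · have h1 : min (ρ z) (ρ x) = ρ x := min_eq_right h
      have h2 : max (ρ z) (ρ x) = ρ z := max_eq_left h
      rw [h1] at hbetween; rw [h2] at hbetween
      rw [abs_of_nonneg (by linarith [hbetween.1, hbetween.2]),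
        abs_of_nonneg (by linarith [hbetween.2]), abs_of_nonneg (by linarith [hbetween.1])]
      ring
  rw [habs]; ring
end Geo

section Geo2
variable {T : Type*} [MetricSpace T]

lemma mem_Icc_interp {a b s : ℝ} (ha : a ∈ Set.Icc (0:ℝ) 1) (hb : b ∈ Set.Icc (0:ℝ) 1)
    (hs : s ∈ Set.Icc (0:ℝ) 1) : a + s * (b - a) ∈ Set.Icc (0:ℝ) 1 := by
  constructor <;> nlinarith [ha.1, ha.2, hb.1, hb.2, hs.1, hs.2]

lemma IsGeodesic.reparam {γ : ℝ → T} (h : IsGeodesic γ) {a b : ℝ}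
    (ha : a ∈ Set.Icc (0:ℝ) 1) (hb : b ∈ Set.Icc (0:ℝ) 1) :
    IsGeodesic (fun r => γ (a + r * (b - a))) := by
  intro s hs t ht
  show dist (γ (a + s * (b - a))) (γ (a + t * (b - a))) =
    |s - t| * dist (γ (a + 0 * (b - a))) (γ (a + 1 * (b - a)))
  rw [h _ (mem_Icc_interp ha hb hs) _ (mem_Icc_interp ha hb ht),
    h _ (mem_Icc_interp ha hb ⟨le_rfl, zero_le_one⟩)
      _ (mem_Icc_interp ha hb ⟨zero_le_one, le_rfl⟩),
    show a + s * (b - a) - (a + t * (b - a)) = (s - t) * (b - a) by ring,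
    show a + 0 * (b - a) - (a + 1 * (b - a)) = -(b - a) by ring,
    abs_neg, abs_mul]
  ring

lemma zero_mem_Icc01 : (0:ℝ) ∈ Set.Icc (0:ℝ) 1 := ⟨le_rfl, zero_le_one⟩
lemma one_mem_Icc01 : (1:ℝ) ∈ Set.Icc (0:ℝ) 1 := ⟨zero_le_one, le_rfl⟩

lemma rtree_proj (hT : IsRTree T) {γ : ℝ → T} (hγ : IsGeodesic γ) (z : T) {t : ℝ}
    (ht : t ∈ Set.Icc (0:ℝ) 1) :
    ∃ u ∈ Set.Icc (0:ℝ) 1,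
      dist z (γ t) = dist z (γ u) + |u - t| * dist (γ 0) (γ 1)
      ∧ dist z (γ 0) = dist z (γ u) + u * dist (γ 0) (γ 1)
      ∧ dist z (γ 1) = dist z (γ u) + (1 - u) * dist (γ 0) (γ 1) := by
  set L := dist (γ 0) (γ 1) with hL
  have hLnn : 0 ≤ L := dist_nonneg
  rcases eq_or_lt_of_le hLnn with hL0 | hLpos
  · refine ⟨t, ht, by simp, ?_, ?_⟩
    · have h0 : dist (γ 0) (γ t) = 0 := by rw [hγ.dist_zero ht, ← hL, ← hL0, mul_zero]
      have h1 : γ 0 = γ t := dist_eq_zero.1 h0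
      rw [h1, ← hL0]; ring
    · have h0 : dist (γ 1) (γ t) = 0 := by rw [hγ.dist_one ht, ← hL, ← hL0, mul_zero]
      have h1 : γ 1 = γ t := dist_eq_zero.1 h0
      rw [h1, ← hL0]; ring
  · rcases eq_or_ne z (γ t) with hz | hz
    · refine ⟨t, ht, by simp [hz], ?_, ?_⟩
      · rw [hz, dist_self, dist_comm, hγ.dist_zero ht, zero_add]
      · rw [hz, dist_self, dist_comm, hγ.dist_one ht, zero_add]
    · have hd : 0 < dist z (γ t) := dist_pos.2 hz
      obtain ⟨σ, hσ, hσ0, hσ1⟩ := hT.1 z (γ t)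
      have hσd : dist (σ 0) (σ 1) = dist z (γ t) := by rw [hσ0, hσ1]
      set K := γ '' Set.Icc (0:ℝ) 1 with hK
      have hKclosed : IsClosed K :=
        (isCompact_Icc.image_of_continuousOn hγ.continuousOn).isClosed
      set S := Set.Icc (0:ℝ) 1 ∩ σ ⁻¹' K with hS
      have hSne : S.Nonempty := ⟨1, ⟨by norm_num, by norm_num⟩,
        by simp only [Set.mem_preimage, hσ1]; exact Set.mem_image_of_mem γ ht⟩
      have hSclosed : IsClosed S :=
        hσ.continuousOn.preimage_isClosed_of_isClosed isClosed_Icc hKclosed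
      have hSbdd : BddBelow S := ⟨0, fun s hs => hs.1.1⟩
      set s₀ := sInf S with hs₀
      have hs₀S : s₀ ∈ S := hSclosed.csInf_mem hSne hSbdd
      have hs₀Icc : s₀ ∈ Set.Icc (0:ℝ) 1 := hs₀S.1
      obtain ⟨u, hu, hγu⟩ := hs₀S.2
      have hnotK : ∀ r : ℝ, 0 ≤ r → r < s₀ → σ r ∉ K := by
        intro r hr0 hrs hmem
        have : s₀ ≤ r := csInf_le hSbdd ⟨⟨hr0, le_trans (le_of_lt hrs) hs₀Icc.2⟩, hmem⟩
        linarith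
      have hzq : dist z (σ s₀) = s₀ * dist z (γ t) := by
        rw [← hσ0, hσ 0 zero_mem_Icc01 s₀ hs₀Icc, hσd,
          abs_of_nonpos (by linarith [hs₀Icc.1]), neg_sub, sub_zero, hσ0]
      have hqt : dist (σ s₀) (γ t) = (1 - s₀) * dist z (γ t) := by
        rw [← hσ1, dist_comm, hσ 1 one_mem_Icc01 s₀ hs₀Icc, hσd,
          abs_of_nonneg (by linarith [hs₀Icc.2]), hσ1]
      have hzu : dist z (γ u) = s₀ * dist z (γ t) := by rw [hγu]; exact hzq
      have hut : |u - t| * L = (1 - s₀) * dist z (γ t) := by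
        rw [← hγ u hu t ht, hγu]; exact hqt
      have hσgeo : IsGeodesic (fun r => σ (0 + r * (s₀ - 0))) :=
        hσ.reparam zero_mem_Icc01 hs₀Icc
      have hσa : (fun r => σ (0 + r * (s₀ - 0))) 0 = z := by
        show σ (0 + 0 * (s₀ - 0)) = z; norm_num [hσ0]
      have hσb : (fun r => σ (0 + r * (s₀ - 0))) 1 = γ u := by
        show σ (0 + 1 * (s₀ - 0)) = γ u; rw [hγu]; norm_num
      refine ⟨u, hu, by rw [hzu, hut]; ring, ?_, ?_⟩
      · -- toward γ 0
        rcases eq_or_ne s₀ 0 with hs00 | hs00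
        · have hzγu : z = γ u := by
            have : dist z (γ u) = 0 := by rw [hzu, hs00, zero_mul]
            exact dist_eq_zero.1 this
          have h1 : dist z (γ 0) = u * L := by
            rw [hzγu, dist_comm, hγ.dist_zero hu]
          have h2 : dist z (γ u) = 0 := by rw [hzγu, dist_self]
          rw [h1, h2]; ring
        rcases eq_or_ne u 0 with hu0 | hu0
        · rw [hu0, zero_mul]; ring
        have hs0pos : 0 < s₀ := lt_of_le_of_ne hs₀Icc.1 (Ne.symm hs00)
        have hupos : 0 < u := lt_of_le_of_ne hu.1 (Ne.symm hu0)
        have hcc := dist_concat hT (z := z) (q := γ u) (x := γ 0)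
          hσgeo (hγ.reparam hu zero_mem_Icc01) hσa hσb
          (by show γ (u + 0 * (0 - u)) = γ u; norm_num)
          (by show γ (u + 1 * (0 - u)) = γ 0; norm_num)
          (by intro hc
              have : dist z (γ u) = 0 := by rw [hc, dist_self]
              rw [hzu] at this; nlinarith)
          (by intro hc
              have : dist (γ 0) (γ u) = 0 := by rw [hc, dist_self]
              rw [hγ.dist_zero hu] at this; nlinarith)
          (by intro s hs t' ht' hc
              refine hnotK (0 + s * (s₀ - 0)) (by nlinarith [hs.1]) (by nlinarith [hs.1, hs.2]) ?_
              rw [show σ (0 + s * (s₀ - 0)) = γ (u + t' * (0 - u)) from hc]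
              exact Set.mem_image_of_mem γ (mem_Icc_interp hu zero_mem_Icc01 ht'))
        rw [hcc, dist_comm (γ u) (γ 0), hγ.dist_zero hu]
      · -- toward γ 1
        rcases eq_or_ne s₀ 0 with hs00 | hs00
        · have hzγu : z = γ u := by
            have : dist z (γ u) = 0 := by rw [hzu, hs00, zero_mul]
            exact dist_eq_zero.1 this
          have h1 : dist z (γ 1) = (1 - u) * L := by
            rw [hzγu, dist_comm, hγ.dist_one hu]
          have h2 : dist z (γ u) = 0 := by rw [hzγu, dist_self]
          rw [h1, h2]; ring
        rcases eq_or_ne u 1 with hu1 | hu1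
        · rw [hu1, sub_self, zero_mul]; ring
        have hs0pos : 0 < s₀ := lt_of_le_of_ne hs₀Icc.1 (Ne.symm hs00)
        have hult : u < 1 := lt_of_le_of_ne hu.2 hu1
        have hcc := dist_concat hT (z := z) (q := γ u) (x := γ 1)
          hσgeo (hγ.reparam hu one_mem_Icc01) hσa hσb
          (by show γ (u + 0 * (1 - u)) = γ u; norm_num)
          (by show γ (u + 1 * (1 - u)) = γ 1; norm_num)
          (by intro hc
              have : dist z (γ u) = 0 := by rw [hc, dist_self]
              rw [hzu] at this; nlinarith)
          (by intro hc
              have : dist (γ 1) (γ u) = 0 := by rw [hc, dist_self]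
              rw [hγ.dist_one hu] at this; nlinarith)
          (by intro s hs t' ht' hc
              refine hnotK (0 + s * (s₀ - 0)) (by nlinarith [hs.1]) (by nlinarith [hs.1, hs.2]) ?_
              rw [show σ (0 + s * (s₀ - 0)) = γ (u + t' * (1 - u)) from hc]
              exact Set.mem_image_of_mem γ (mem_Icc_interp hu one_mem_Icc01 ht'))
        rw [hcc, dist_comm (γ u) (γ 1), hγ.dist_one hu]
end Geo2

section Geo3
variable {T : Type*} [MetricSpace T]

lemma rtree_key (hT : IsRTree T) {γ : ℝ → T} (hγ : IsGeodesic γ) (z : T) {t : ℝ}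
    (ht : t ∈ Set.Icc (0:ℝ) 1) :
    dist z (γ t) ≤ max (dist z (γ 0) - t * dist (γ 0) (γ 1))
      (dist z (γ 1) - (1 - t) * dist (γ 0) (γ 1)) := by
  obtain ⟨u, hu, e1, e2, e3⟩ := rtree_proj hT hγ z ht
  rcases le_total t u with h | h
  · refine le_max_of_le_left ?_
    rw [e1, e2, abs_of_nonneg (by linarith)]
    have := dist_nonneg (x := γ 0) (y := γ 1)
    nlinarith
  · refine le_max_of_le_right ?_
    rw [e1, e3, abs_of_nonpos (by linarith), neg_sub]
    have := dist_nonneg (x := γ 0) (y := γ 1)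
    nlinarith

lemma rtree_convex_dist (hT : IsRTree T) {γ : ℝ → T} (hγ : IsGeodesic γ) (z : T) {t : ℝ}
    (ht : t ∈ Set.Icc (0:ℝ) 1) :
    dist z (γ t) ≤ (1 - t) * dist z (γ 0) + t * dist z (γ 1) := by
  refine le_trans (rtree_key hT hγ z ht) (max_le ?_ ?_)
  · have h1 : dist z (γ 0) ≤ dist z (γ 1) + dist (γ 0) (γ 1) := by
      rw [dist_comm (γ 0)]; exact dist_triangle _ _ _
    nlinarith [ht.1, ht.2, dist_nonneg (x := z) (y := γ 0), dist_nonneg (x := z) (y := γ 1)]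
  · have h1 : dist z (γ 1) ≤ dist z (γ 0) + dist (γ 0) (γ 1) := dist_triangle _ _ _
    nlinarith [ht.1, ht.2, dist_nonneg (x := z) (y := γ 0), dist_nonneg (x := z) (y := γ 1)]

lemma rtree_convex_sq (hT : IsRTree T) {γ : ℝ → T} (hγ : IsGeodesic γ) (z : T) {t : ℝ}
    (ht : t ∈ Set.Icc (0:ℝ) 1) :
    dist z (γ t) ^ 2 ≤ (1 - t) * dist z (γ 0) ^ 2 + t * dist z (γ 1) ^ 2
      - t * (1 - t) * dist (γ 0) (γ 1) ^ 2 := by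
  obtain ⟨u, hu, e1, e2, e3⟩ := rtree_proj hT hγ z ht
  have hh : 0 ≤ dist z (γ u) := dist_nonneg
  have hLnn : 0 ≤ dist (γ 0) (γ 1) := dist_nonneg
  rcases le_total t u with h | h
  · rw [e1, e2, e3, abs_of_nonneg (by linarith)]
    nlinarith [mul_nonneg (mul_nonneg (mul_nonneg hh hLnn) ht.1)
      (sub_nonneg.2 hu.2), sq_nonneg (dist (γ 0) (γ 1)), ht.1, ht.2, hu.1, hu.2]
  · rw [e1, e2, e3, abs_of_nonpos (by linarith), neg_sub]
    nlinarith [mul_nonneg (mul_nonneg (mul_nonneg hh hLnn) hu.1)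
      (sub_nonneg.2 ht.2), sq_nonneg (dist (γ 0) (γ 1)), ht.1, ht.2, hu.1, hu.2]

lemma rtree_convex_two (hT : IsRTree T) {γ γ' : ℝ → T} (hγ : IsGeodesic γ)
    (hγ' : IsGeodesic γ') {t : ℝ} (ht : t ∈ Set.Icc (0:ℝ) 1) :
    dist (γ t) (γ' t) ≤ (1 - t) * dist (γ 0) (γ' 0) + t * dist (γ 1) (γ' 1) := by
  have hA := rtree_convex_dist hT hγ' (γ 0) ht
  have hB := rtree_convex_dist hT hγ' (γ 1) ht
  have h0 := rtree_key hT hγ (γ' t) ht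
  have tri1 : dist (γ 0) (γ' 1) ≤ dist (γ 0) (γ 1) + dist (γ 1) (γ' 1) := dist_triangle _ _ _
  have tri2 : dist (γ 1) (γ' 0) ≤ dist (γ 1) (γ 0) + dist (γ 0) (γ' 0) := dist_triangle _ _ _
  have c1 : dist (γ' t) (γ 0) = dist (γ 0) (γ' t) := dist_comm _ _
  have c2 : dist (γ' t) (γ 1) = dist (γ 1) (γ' t) := dist_comm _ _
  have c3 : dist (γ t) (γ' t) = dist (γ' t) (γ t) := dist_comm _ _
  have c4 : dist (γ 1) (γ 0) = dist (γ 0) (γ 1) := dist_comm _ _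
  have m1 := mul_le_mul_of_nonneg_left tri1 ht.1
  have m2 := mul_le_mul_of_nonneg_left tri2 (by linarith [ht.2] : (0:ℝ) ≤ 1 - t)
  have m3 := mul_le_mul_of_nonneg_left hA ht.1
  have m4 := mul_le_mul_of_nonneg_left hB (by linarith [ht.2] : (0:ℝ) ≤ 1 - t)
  rcases max_cases (dist (γ' t) (γ 0) - t * dist (γ 0) (γ 1))
    (dist (γ' t) (γ 1) - (1 - t) * dist (γ 0) (γ 1)) with ⟨hmax, _⟩ | ⟨hmax, _⟩ <;>
    rw [hmax] at h0 <;> nlinarith [ht.1, ht.2, hA, hB]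

noncomputable def interp (hT : IsRTree T) (x y : T) : ℝ → T := (hT.1 x y).choose

lemma interp_geodesic (hT : IsRTree T) (x y : T) : IsGeodesic (interp hT x y) :=
  (hT.1 x y).choose_spec.1

@[simp] lemma interp_zero (hT : IsRTree T) (x y : T) : interp hT x y 0 = x :=
  (hT.1 x y).choose_spec.2.1

@[simp] lemma interp_one (hT : IsRTree T) (x y : T) : interp hT x y 1 = y :=
  (hT.1 x y).choose_spec.2.2

lemma interp_dist_le (hT : IsRTree T) {x y x' y' : T} {t : ℝ} (ht : t ∈ Set.Icc (0:ℝ) 1) :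
    dist (interp hT x y t) (interp hT x' y' t) ≤ (1 - t) * dist x x' + t * dist y y' := by
  have := rtree_convex_two hT (interp_geodesic hT x y) (interp_geodesic hT x' y') ht
  simpa using this

lemma geodesic_eq_interp (hT : IsRTree T) {γ : ℝ → T} (hγ : IsGeodesic γ) {t : ℝ}
    (ht : t ∈ Set.Icc (0:ℝ) 1) : γ t = interp hT (γ 0) (γ 1) t := by
  have h := rtree_convex_two hT hγ (interp_geodesic hT (γ 0) (γ 1)) ht
  simp only [interp_zero, interp_one, dist_self, mul_zero, add_zero] at h
  exact dist_le_zero.1 h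

lemma interp_point_dist (hT : IsRTree T) (x y z : T) {t : ℝ} (ht : t ∈ Set.Icc (0:ℝ) 1) :
    dist z (interp hT x y t) ≤ (1 - t) * dist z x + t * dist z y := by
  have := rtree_convex_dist hT (interp_geodesic hT x y) z ht
  simpa using this

lemma interp_point_sq (hT : IsRTree T) (x y z : T) {t : ℝ} (ht : t ∈ Set.Icc (0:ℝ) 1) :
    dist z (interp hT x y t) ^ 2 ≤
      (1 - t) * dist z x ^ 2 + t * dist z y ^ 2 - t * (1 - t) * dist x y ^ 2 := by
  have := rtree_convex_sq hT (interp_geodesic hT x y) z ht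
  simpa using this

noncomputable def indmean (hT : IsRTree T) : (k : ℕ) → (Fin (k+1) → T) → T
  | 0, x => x 0
  | (k+1), x => interp hT (indmean hT k (fun i => x i.castSucc)) (x (Fin.last (k+1)))
      (1/(k+2))

lemma inv_succ_mem_Icc (k : ℕ) : (1 : ℝ)/(k+2) ∈ Set.Icc (0:ℝ) 1 := by
  constructor
  · positivity
  · rw [div_le_one (by positivity)]
    have : (0:ℝ) ≤ (k:ℝ) := Nat.cast_nonneg k
    linarith

lemma indmean_unique (hT : IsRTree T) :
    ∀ (k : ℕ) (x : Fin (k+1) → T) (s : T), IsInductiveMean k x s → s = indmean hT k x := by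
  intro k
  induction k with
  | zero => intro x s hs; exact hs
  | succ k ih =>
    intro x s hs
    obtain ⟨s', hs', γ, hγ, h0, h1, hst⟩ := hs
    have hsi : s' = indmean hT k (fun i => x i.castSucc) := ih _ _ hs'
    have ht : (1:ℝ)/(k+2) ∈ Set.Icc (0:ℝ) 1 := inv_succ_mem_Icc k
    rw [hst, geodesic_eq_interp hT hγ ht, h0, h1, hsi]
    rfl

lemma indmean_lipschitz (hT : IsRTree T) (k : ℕ) :
    LipschitzWith 1 (indmean hT k) := by
  induction k with
  | zero =>
    refine LipschitzWith.of_dist_le_mul fun x y => ?_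
    simp only [indmean, NNReal.coe_one, one_mul]
    exact dist_le_pi_dist x y 0
  | succ k ih =>
    refine LipschitzWith.of_dist_le_mul fun x y => ?_
    simp only [indmean, NNReal.coe_one, one_mul]
    have ht : (1:ℝ)/(k+2) ∈ Set.Icc (0:ℝ) 1 := inv_succ_mem_Icc k
    refine le_trans (interp_dist_le hT ht) ?_
    have h1 : dist (indmean hT k (fun i => x i.castSucc)) (indmean hT k (fun i => y i.castSucc))
        ≤ dist x y := by
      refine le_trans (ih.dist_le_mul _ _) ?_
      rw [NNReal.coe_one, one_mul]
      refine (dist_pi_le_iff dist_nonneg).2 fun i => dist_le_pi_dist x y _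
    have h2 : dist (x (Fin.last (k+1))) (y (Fin.last (k+1))) ≤ dist x y :=
      dist_le_pi_dist x y _
    nlinarith [ht.1, ht.2]

lemma indmean_dist_le (hT : IsRTree T) (k : ℕ) (x : Fin (k+1) → T) (z : T) (D' : ℝ)
    (h : ∀ i, dist (x i) z ≤ D') : dist (indmean hT k x) z ≤ D' := by
  induction k with
  | zero => exact h 0
  | succ k ih =>
    have ht : (1:ℝ)/(k+2) ∈ Set.Icc (0:ℝ) 1 := inv_succ_mem_Icc k
    show dist (interp hT _ _ _) z ≤ D'
    rw [dist_comm]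
    refine le_trans (interp_point_dist hT _ _ z ht) ?_
    have h1 : dist (indmean hT k (fun i => x i.castSucc)) z ≤ D' :=
      ih (fun i => x i.castSucc) (fun i => h _)
    have h2 : dist (x (Fin.last (k+1))) z ≤ D' := h _
    rw [dist_comm z, dist_comm z]
    nlinarith [ht.1, ht.2]
end Geo3

section Geo3b
variable {T : Type*} [MetricSpace T]

lemma interp_continuous (hT : IsRTree T) {t : ℝ} (ht : t ∈ Set.Icc (0:ℝ) 1) :
    Continuous fun q : T × T => interp hT q.1 q.2 t := by
  refine (LipschitzWith.of_dist_le_mul (K := 1) fun q q' => ?_).continuous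
  rw [NNReal.coe_one, one_mul]
  refine le_trans (interp_dist_le hT ht) ?_
  have h1 : dist q.1 q'.1 ≤ dist q q' := by
    rw [Prod.dist_eq]; exact le_max_left _ _
  have h2 : dist q.2 q'.2 ≤ dist q q' := by
    rw [Prod.dist_eq]; exact le_max_right _ _
  nlinarith [ht.1, ht.2]
end Geo3b

section Meas1
variable {T : Type*} [MetricSpace T] [MeasurableSpace T] [BorelSpace T]
  [SecondCountableTopology T]

lemma msupport_isClosed (ν : Measure T) : IsClosed (msupport ν) := by
  rw [← isOpen_compl_iff, Metric.isOpen_iff]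
  intro x hx
  simp only [msupport, Set.mem_compl_iff, Set.mem_setOf_eq, not_forall] at hx
  obtain ⟨ε, hε, h0⟩ := hx
  push_neg at h0
  have h0' : ν (Metric.ball x ε) = 0 := le_antisymm h0 (zero_le)
  refine ⟨ε/2, by linarith, fun y hy => ?_⟩
  simp only [msupport, Set.mem_compl_iff, Set.mem_setOf_eq, not_forall]
  refine ⟨ε/2, ⟨by linarith, ?_⟩⟩
  have hsub : Metric.ball y (ε/2) ⊆ Metric.ball x ε := by
    intro w hw
    rw [Metric.mem_ball] at *
    calc dist w x ≤ dist w y + dist y x := dist_triangle _ _ _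
      _ < ε/2 + ε/2 := add_lt_add hw hy
      _ = ε := by ring
  simp only [not_lt, le_zero_iff]  -- goal shape: ¬ 0 < ν _
  exact le_antisymm (h0' ▸ measure_mono hsub) (zero_le)

lemma ae_mem_msupport (ν : Measure T) : ∀ᵐ y ∂ν, y ∈ msupport ν := by
  rw [MeasureTheory.ae_iff]
  refine MeasureTheory.measure_null_of_locally_null _ fun x hx => ?_
  simp only [Set.mem_setOf_eq, msupport, not_forall] at hx
  obtain ⟨ε, hε, h0⟩ := hx
  push_neg at h0
  exact ⟨Metric.ball x ε, mem_nhdsWithin_of_mem_nhds (Metric.ball_mem_nhds x hε),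
    le_antisymm h0 (zero_le)⟩

lemma msupport_nonempty (ν : Measure T) [IsProbabilityMeasure ν] :
    (msupport ν).Nonempty := by
  haveI : (MeasureTheory.ae ν).NeBot := MeasureTheory.ae_neBot.2 (IsProbabilityMeasure.ne_zero ν)
  obtain ⟨x, hx⟩ := (ae_mem_msupport ν).exists
  exact ⟨x, hx⟩

lemma msupport_measure_eq_one (ν : Measure T) [IsProbabilityMeasure ν] :
    ν (msupport ν) = 1 := by
  have h := ae_mem_msupport ν
  rw [MeasureTheory.ae_iff] at h
  have : ν (msupport ν)ᶜ = 0 := h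
  rw [← MeasureTheory.prob_compl_eq_zero_iff (msupport_isClosed ν).measurableSet]
  exact this

lemma dist_le_of_mem_msupport {ν : Measure T} {D : ℝ} (hD0 : 0 ≤ D)
    (hD : EMetric.diam (msupport ν) ≤ ENNReal.ofReal D) {x y : T}
    (hx : x ∈ msupport ν) (hy : y ∈ msupport ν) : dist x y ≤ D := by
  have h := le_trans (EMetric.edist_le_diam_of_mem hx hy) hD
  rw [edist_dist] at h
  exact (ENNReal.ofReal_le_ofReal_iff hD0).1 h
end Meas1

section Meas2
variable {T : Type*} [MetricSpace T] [MeasurableSpace T] [BorelSpace T]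
  [SecondCountableTopology T] {ν : Measure T} [IsProbabilityMeasure ν]

lemma integrable_dist_sq_of_bound {p : T} {C : ℝ}
    (h : ∀ᵐ y ∂ν, dist p y ≤ C) : Integrable (fun y => dist p y ^ 2) ν := by
  refine Integrable.mono' (integrable_const (C^2))
    (((continuous_const.dist continuous_id).pow 2).aestronglyMeasurable) ?_
  filter_upwards [h] with y hy
  rw [Real.norm_eq_abs, abs_of_nonneg (by positivity)]
  have h2 := dist_nonneg (x := p) (y := y)
  nlinarith

lemma msupport_compl_null (ν : Measure T) : ν (msupport ν)ᶜ = 0 := by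
  have h := ae_mem_msupport ν
  rw [MeasureTheory.ae_iff] at h
  exact h

lemma integrable_dist_sq (ν : Measure T) [IsProbabilityMeasure ν] (p : T) {D : ℝ}
    (hD0 : 0 ≤ D) (hD : EMetric.diam (msupport ν) ≤ ENNReal.ofReal D) :
    Integrable (fun y => dist p y ^ 2) ν := by
  obtain ⟨x₀, hx₀⟩ := msupport_nonempty ν
  refine integrable_dist_sq_of_bound (C := dist p x₀ + D) ?_
  filter_upwards [ae_mem_msupport ν] with y hy
  calc dist p y ≤ dist p x₀ + dist x₀ y := dist_triangle _ _ _
    _ ≤ dist p x₀ + D := by linarith [dist_le_of_mem_msupport hD0 hD hx₀ hy]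

lemma variance_ineq (hT : IsRTree T) {D : ℝ} (hD0 : 0 ≤ D)
    (hD : EMetric.diam (msupport ν) ≤ ENNReal.ofReal D) (b : T)
    (hb : ∀ x : T, ∫ y, dist b y ^ 2 ∂ν ≤ ∫ y, dist x y ^ 2 ∂ν) (p : T) :
    (∫ y, dist b y ^ 2 ∂ν) + dist p b ^ 2 ≤ ∫ y, dist p y ^ 2 ∂ν := by
  have hint : ∀ q : T, Integrable (fun y => dist q y ^ 2) ν :=
    fun q => integrable_dist_sq ν q hD0 hD
  have key : ∀ t : ℝ, t ∈ Set.Icc (0:ℝ) 1 → 0 < t →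
      (∫ y, dist b y ^ 2 ∂ν) + (1 - t) * dist b p ^ 2 ≤ ∫ y, dist p y ^ 2 ∂ν := by
    intro t ht htpos
    have h1 : (∫ y, dist b y ^ 2 ∂ν) ≤ ∫ y, dist (interp hT b p t) y ^ 2 ∂ν :=
      hb _
    have h2 : (∫ y, dist (interp hT b p t) y ^ 2 ∂ν) ≤
        (1 - t) * (∫ y, dist b y ^ 2 ∂ν) + t * (∫ y, dist p y ^ 2 ∂ν)
          - t * (1 - t) * dist b p ^ 2 := by
      have hpt : ∀ y, dist (interp hT b p t) y ^ 2 ≤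
          (1 - t) * dist b y ^ 2 + t * dist p y ^ 2 - t * (1 - t) * dist b p ^ 2 := by
        intro y
        have h := interp_point_sq hT b p y ht
        rw [dist_comm y (interp hT b p t), dist_comm y b, dist_comm y p] at h
        exact h
      have hI1 : Integrable (fun y => (1 - t) * dist b y ^ 2) ν := (hint b).const_mul (1-t)
      have hI2 : Integrable (fun y => t * dist p y ^ 2) ν := (hint p).const_mul t
      have hIadd : Integrable (fun y => (1 - t) * dist b y ^ 2 + t * dist p y ^ 2) ν :=
        hI1.add hI2
      have hIc : Integrable (fun _ : T => t * (1 - t) * dist b p ^ 2) ν := integrable_const _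
      calc (∫ y, dist (interp hT b p t) y ^ 2 ∂ν)
          ≤ ∫ y, ((1 - t) * dist b y ^ 2 + t * dist p y ^ 2
              - t * (1 - t) * dist b p ^ 2) ∂ν := by
            exact integral_mono (hint _) (hIadd.sub hIc) hpt
        _ = (1 - t) * (∫ y, dist b y ^ 2 ∂ν) + t * (∫ y, dist p y ^ 2 ∂ν)
              - t * (1 - t) * dist b p ^ 2 := by
            rw [integral_sub hIadd hIc, integral_add hI1 hI2,
              integral_const_mul, integral_const_mul, integral_const]
            simp [measure_univ]
    have h3 : t * ((∫ y, dist b y ^ 2 ∂ν) + (1 - t) * dist b p ^ 2)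
        ≤ t * (∫ y, dist p y ^ 2 ∂ν) := by nlinarith
    exact le_of_mul_le_mul_left (by linarith) htpos
  rw [dist_comm p b]
  refine le_of_forall_pos_le_add fun ε hε => ?_
  set t := min 1 (ε / (dist b p ^ 2 + 1)) with hts
  have ht1 : 0 < t := lt_min one_pos (by positivity)
  have ht2 : t ≤ 1 := min_le_left _ _
  have h := key t ⟨le_of_lt ht1, ht2⟩ ht1
  have htb : t * dist b p ^ 2 ≤ ε := by
    have h1 : t ≤ ε / (dist b p ^ 2 + 1) := min_le_right _ _
    have h2 : (0:ℝ) ≤ dist b p ^ 2 := sq_nonneg _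
    have h3 : ε / (dist b p ^ 2 + 1) * (dist b p ^ 2) ≤ ε := by
      rw [div_mul_eq_mul_div, div_le_iff₀ (by positivity)]
      nlinarith
    nlinarith
  linarith

lemma V_le_D_sq (ν : Measure T) [IsProbabilityMeasure ν] {D : ℝ} (hD0 : 0 ≤ D)
    (hD : EMetric.diam (msupport ν) ≤ ENNReal.ofReal D) (b : T)
    (hb : ∀ x : T, ∫ y, dist b y ^ 2 ∂ν ≤ ∫ y, dist x y ^ 2 ∂ν) :
    (∫ y, dist b y ^ 2 ∂ν) ≤ D ^ 2 := by
  obtain ⟨x₀, hx₀⟩ := msupport_nonempty ν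
  refine le_trans (hb x₀) ?_
  calc (∫ y, dist x₀ y ^ 2 ∂ν) ≤ ∫ _, D ^ 2 ∂ν := by
        refine integral_mono_ae (integrable_dist_sq ν x₀ hD0 hD) (integrable_const _) ?_
        filter_upwards [ae_mem_msupport ν] with y hy
        have h1 := dist_le_of_mem_msupport hD0 hD hx₀ hy
        have h2 := dist_nonneg (x := x₀) (y := y)
        nlinarith
    _ = D ^ 2 := by simp [measure_univ]
end Meas2

section Meas3
variable {T : Type*} [MetricSpace T] [MeasurableSpace T] [BorelSpace T]
  [SecondCountableTopology T] {ν : Measure T} [IsProbabilityMeasure ν]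

lemma pi_msupport_compl_null (ν : Measure T) [IsProbabilityMeasure ν] (k : ℕ) :
    (Measure.pi fun _ : Fin (k+1) => ν) (Set.pi Set.univ fun _ => msupport ν)ᶜ = 0 := by
  have hmeas : MeasurableSet (Set.pi Set.univ fun _ : Fin (k+1) => msupport ν) :=
    MeasurableSet.pi Set.countable_univ fun _ _ => (msupport_isClosed ν).measurableSet
  rw [measure_compl hmeas (measure_ne_top _ _), Measure.pi_pi]
  simp [msupport_measure_eq_one ν]

lemma ae_pi_mem_msupport (ν : Measure T) [IsProbabilityMeasure ν] (k : ℕ) :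
    ∀ᵐ x ∂(Measure.pi fun _ : Fin (k+1) => ν), ∀ i, x i ∈ msupport ν := by
  rw [MeasureTheory.ae_iff]
  refine measure_mono_null (fun x hx => ?_) (pi_msupport_compl_null ν k)
  simp only [Set.mem_setOf_eq, not_forall] at hx
  simp only [Set.mem_compl_iff, Set.mem_pi, not_forall]
  obtain ⟨i, hi⟩ := hx
  exact ⟨i, Set.mem_univ i, hi⟩

lemma sturm (hT : IsRTree T) {D : ℝ} (hD0 : 0 ≤ D)
    (hD : EMetric.diam (msupport ν) ≤ ENNReal.ofReal D) (b : T)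
    (hb : ∀ x : T, ∫ y, dist b y ^ 2 ∂ν ≤ ∫ y, dist x y ^ 2 ∂ν) :
    ∀ k : ℕ, (∫ x, dist b (indmean hT k x) ^ 2 ∂(Measure.pi fun _ : Fin (k+1) => ν))
      ≤ (∫ y, dist b y ^ 2 ∂ν) / (k+1) := by
  obtain ⟨x₀, hx₀⟩ := msupport_nonempty ν
  have hVnn : 0 ≤ ∫ y, dist b y ^ 2 ∂ν :=
    integral_nonneg fun y => by positivity
  have hR0 : (0:ℝ) ≤ dist b x₀ + D := add_nonneg dist_nonneg hD0
  have hDR : D ≤ dist b x₀ + D := le_add_of_nonneg_left dist_nonneg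
  -- a.e. bound for the inductive mean
  have hind : ∀ (k : ℕ) (x : Fin (k+1) → T), (∀ i, x i ∈ msupport ν) →
      dist b (indmean hT k x) ≤ dist b x₀ + D := by
    intro k x hx
    have h1 : dist (indmean hT k x) x₀ ≤ D :=
      indmean_dist_le hT k x x₀ D fun i => dist_le_of_mem_msupport hD0 hD (hx i) hx₀
    calc dist b (indmean hT k x) ≤ dist b x₀ + dist x₀ (indmean hT k x) := dist_triangle _ _ _
      _ ≤ dist b x₀ + D := by rw [dist_comm x₀]; linarith
  intro k
  induction k with
  | zero =>
    have he := (measurePreserving_funUnique ν (Fin 1)).integral_comp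
      (MeasurableEquiv.funUnique (Fin 1) T).measurableEmbedding (fun y => dist b y ^ 2)
    have heq : (∫ x, dist b (indmean hT 0 x) ^ 2 ∂(Measure.pi fun _ : Fin 1 => ν))
        = ∫ y, dist b y ^ 2 ∂ν := he
    rw [heq]
    norm_num
  | succ k ih =>
    have ht : (1:ℝ)/(k+2) ∈ Set.Icc (0:ℝ) 1 := inv_succ_mem_Icc k
    set t := (1:ℝ)/(k+2) with hts
    set π := (Measure.pi fun _ : Fin (k+1) => ν) with hπ
    set P2 := ν.prod π with hP2
    set V := ∫ y, dist b y ^ 2 ∂ν with hV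
    -- step 1 : rewrite as an integral over the product measure
    have hmp := (measurePreserving_piFinSuccAbove (fun _ : Fin (k+2) => ν)
      (Fin.last (k+1))).symm (MeasurableEquiv.piFinSuccAbove (fun _ : Fin (k+2) => T)
      (Fin.last (k+1)))
    have hstep1 : (∫ x, dist b (indmean hT (k+1) x) ^ 2
          ∂(Measure.pi fun _ : Fin (k+2) => ν))
        = ∫ p, dist b (interp hT (indmean hT k p.2) p.1 t) ^ 2 ∂P2 := by
      rw [← hmp.integral_comp (MeasurableEquiv.piFinSuccAbove (fun _ : Fin (k+2) => T)
        (Fin.last (k+1))).symm.measurableEmbedding (fun x => dist b (indmean hT (k+1) x) ^ 2)]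
      refine integral_congr_ae (Filter.Eventually.of_forall fun p => ?_)
      have he : ((MeasurableEquiv.piFinSuccAbove (fun _ : Fin (k+2) => T)
          (Fin.last (k+1))).symm p) = Fin.insertNth (Fin.last (k+1)) p.1 p.2 := rfl
      show dist b (indmean hT (k+1) ((MeasurableEquiv.piFinSuccAbove
          (fun _ : Fin (k+2) => T) (Fin.last (k+1))).symm p)) ^ 2
        = dist b (interp hT (indmean hT k p.2) p.1 t) ^ 2
      rw [he]
      have h1 : indmean hT (k+1) (Fin.insertNth (Fin.last (k+1)) p.1 p.2)
          = interp hT (indmean hT k p.2) p.1 t := by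
        simp only [indmean]
        rw [Fin.insertNth_apply_same]
        have h2 : (fun i : Fin (k+1) => (Fin.insertNth (Fin.last (k+1)) p.1 p.2 : Fin (k+2) → T) i.castSucc) = p.2 := by
          funext i; rw [← Fin.succAbove_last, Fin.insertNth_apply_succAbove]
        rw [h2]
      rw [h1]
    -- pointwise convexity inequality
    have hptw : ∀ p : T × (Fin (k+1) → T),
        dist b (interp hT (indmean hT k p.2) p.1 t) ^ 2 ≤
          (1-t) * dist b (indmean hT k p.2) ^ 2 + t * dist b p.1 ^ 2
            - t * (1-t) * dist (indmean hT k p.2) p.1 ^ 2 :=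
      fun p => interp_point_sq hT _ _ b ht
    have hcont_ind : Continuous (indmean hT k) := (indmean_lipschitz hT k).continuous
    have hcG : Continuous fun p : T × (Fin (k+1) → T) =>
        dist b (interp hT (indmean hT k p.2) p.1 t) ^ 2 := by
      have : Continuous fun p : T × (Fin (k+1) → T) => interp hT (indmean hT k p.2) p.1 t :=
        (interp_continuous hT ht).comp
          ((hcont_ind.comp continuous_snd).prodMk continuous_fst)
      exact (continuous_const.dist this).pow 2
    have hcA : Continuous fun p : T × (Fin (k+1) → T) => dist b (indmean hT k p.2) ^ 2 :=
      (continuous_const.dist (hcont_ind.comp continuous_snd)).pow 2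
    have hcB : Continuous fun p : T × (Fin (k+1) → T) => dist b p.1 ^ 2 :=
      (continuous_const.dist continuous_fst).pow 2
    have hcC : Continuous fun p : T × (Fin (k+1) → T) => dist (indmean hT k p.2) p.1 ^ 2 :=
      ((hcont_ind.comp continuous_snd).dist continuous_fst).pow 2
    have haeP2 : ∀ᵐ p ∂P2, p.1 ∈ msupport ν ∧ ∀ i, p.2 i ∈ msupport ν := by
      rw [MeasureTheory.ae_iff]
      have hsub : {p : T × (Fin (k+1) → T) | ¬(p.1 ∈ msupport ν ∧ ∀ i, p.2 i ∈ msupport ν)}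
          ⊆ ((msupport ν)ᶜ ×ˢ Set.univ) ∪
            (Set.univ ×ˢ (Set.pi Set.univ fun _ : Fin (k+1) => msupport ν)ᶜ) := by
        intro p hp
        simp only [Set.mem_setOf_eq, not_and_or] at hp
        rcases hp with h | h
        · exact Set.mem_union_left _ ⟨h, Set.mem_univ _⟩
        · refine Set.mem_union_right _ ⟨Set.mem_univ _, ?_⟩
          simp only [Set.mem_compl_iff, Set.mem_pi, not_forall]
          push_neg at h
          obtain ⟨i, hi⟩ := h
          exact ⟨i, Set.mem_univ i, hi⟩
      refine measure_mono_null hsub (measure_union_null ?_ ?_)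
      · rw [hP2, Measure.prod_prod, msupport_compl_null ν, zero_mul]
      · rw [hP2, Measure.prod_prod, pi_msupport_compl_null ν k, mul_zero]
    have hbnd : ∀ᵐ p ∂P2, dist b (interp hT (indmean hT k p.2) p.1 t) ≤ dist b x₀ + D
        ∧ dist b (indmean hT k p.2) ≤ dist b x₀ + D ∧ dist b p.1 ≤ dist b x₀ + D
        ∧ dist (indmean hT k p.2) p.1 ≤ dist b x₀ + D := by
      filter_upwards [haeP2] with p hp
      have hA : dist b (indmean hT k p.2) ≤ dist b x₀ + D := hind k p.2 hp.2
      have hB : dist b p.1 ≤ dist b x₀ + D := by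
        calc dist b p.1 ≤ dist b x₀ + dist x₀ p.1 := dist_triangle _ _ _
          _ ≤ dist b x₀ + D := by
              linarith [dist_le_of_mem_msupport hD0 hD hx₀ hp.1]
      have hC : dist (indmean hT k p.2) p.1 ≤ dist b x₀ + D :=
        le_trans (indmean_dist_le hT k p.2 p.1 D
          fun i => dist_le_of_mem_msupport hD0 hD (hp.2 i) hp.1) hDR
      refine ⟨?_, hA, hB, hC⟩
      calc dist b (interp hT (indmean hT k p.2) p.1 t)
          ≤ (1-t) * dist b (indmean hT k p.2) + t * dist b p.1 :=
            interp_point_dist hT _ _ b ht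
        _ ≤ dist b x₀ + D := by nlinarith [ht.1, ht.2]
    have hsq : ∀ f : T × (Fin (k+1) → T) → ℝ, Continuous (fun p => f p ^ 2) →
        (∀ᵐ p ∂P2, f p ≤ dist b x₀ + D) → (∀ p, 0 ≤ f p) →
        Integrable (fun p => f p ^ 2) P2 := by
      intro f hc hae hnn
      refine Integrable.mono' (integrable_const ((dist b x₀ + D)^2))
        hc.aestronglyMeasurable ?_
      filter_upwards [hae] with p hp
      rw [Real.norm_eq_abs, abs_of_nonneg (sq_nonneg _)]
      nlinarith [hnn p, hp]
    have hIG : Integrable (fun p => dist b (interp hT (indmean hT k p.2) p.1 t) ^ 2) P2 :=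
      hsq _ hcG (by filter_upwards [hbnd] with p hp using hp.1) (fun p => dist_nonneg)
    have hIA : Integrable (fun p => dist b (indmean hT k p.2) ^ 2) P2 :=
      hsq _ hcA (by filter_upwards [hbnd] with p hp using hp.2.1) (fun p => dist_nonneg)
    have hIB : Integrable (fun p => dist b p.1 ^ 2) P2 :=
      hsq _ hcB (by filter_upwards [hbnd] with p hp using hp.2.2.1) (fun p => dist_nonneg)
    have hIC : Integrable (fun p => dist (indmean hT k p.2) p.1 ^ 2) P2 :=
      hsq _ hcC (by filter_upwards [hbnd] with p hp using hp.2.2.2) (fun p => dist_nonneg)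
    have hIH : Integrable (fun p : T × (Fin (k+1) → T) =>
        (1-t) * dist b (indmean hT k p.2) ^ 2 + t * dist b p.1 ^ 2
          - t * (1-t) * dist (indmean hT k p.2) p.1 ^ 2) P2 :=
      ((hIA.const_mul (1-t)).add (hIB.const_mul t)).sub (hIC.const_mul (t*(1-t)))
    have hmono : (∫ p, dist b (interp hT (indmean hT k p.2) p.1 t) ^ 2 ∂P2) ≤
        ∫ p, ((1-t) * dist b (indmean hT k p.2) ^ 2 + t * dist b p.1 ^ 2
          - t * (1-t) * dist (indmean hT k p.2) p.1 ^ 2) ∂P2 :=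
      integral_mono hIG hIH hptw
    have hfub : (∫ p, ((1-t) * dist b (indmean hT k p.2) ^ 2 + t * dist b p.1 ^ 2
          - t * (1-t) * dist (indmean hT k p.2) p.1 ^ 2) ∂P2)
        = ∫ x', (∫ y, ((1-t) * dist b (indmean hT k x') ^ 2 + t * dist b y ^ 2
          - t * (1-t) * dist (indmean hT k x') y ^ 2) ∂ν) ∂π :=
      integral_prod_symm _ hIH
    have hinner : ∀ x' : Fin (k+1) → T,
        (∫ y, ((1-t) * dist b (indmean hT k x') ^ 2 + t * dist b y ^ 2
          - t * (1-t) * dist (indmean hT k x') y ^ 2) ∂ν)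
        ≤ (1-t)^2 * dist b (indmean hT k x') ^ 2 + t^2 * V := by
      intro x'
      have hintq : ∀ q : T, Integrable (fun y => dist q y ^ 2) ν :=
        fun q => integrable_dist_sq ν q hD0 hD
      have hI2 : Integrable (fun y => t * dist b y ^ 2) ν := (hintq b).const_mul t
      have hI1 : Integrable (fun y : T =>
          (1-t) * dist b (indmean hT k x') ^ 2 + t * dist b y ^ 2) ν :=
        (integrable_const _).add hI2
      have hI3 : Integrable (fun y => t * (1-t) * dist (indmean hT k x') y ^ 2) ν :=
        (hintq _).const_mul _
      rw [integral_sub hI1 hI3, integral_add (integrable_const _) hI2, integral_const,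
        integral_const_mul, integral_const_mul]
      simp only [measure_univ, ENNReal.toReal_one, probReal_univ, one_smul]
      have hvar := variance_ineq hT hD0 hD b hb (indmean hT k x')
      rw [dist_comm (indmean hT k x') b] at hvar
      have hprod := mul_le_mul_of_nonneg_left hvar
        (mul_nonneg ht.1 (by linarith [ht.2] : (0:ℝ) ≤ 1 - t))
      nlinarith [hprod]
    have hIA' : Integrable (fun x' : Fin (k+1) → T => dist b (indmean hT k x') ^ 2) π := by
      refine Integrable.mono' (integrable_const ((dist b x₀ + D)^2))
        ((continuous_const.dist hcont_ind).pow 2).aestronglyMeasurable ?_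
      filter_upwards [ae_pi_mem_msupport ν k] with x' hx'
      rw [Real.norm_eq_abs, abs_of_nonneg (sq_nonneg _)]
      nlinarith [hind k x' hx', dist_nonneg (x := b) (y := indmean hT k x')]
    have hImarg : Integrable (fun x' => ∫ y, ((1-t) * dist b (indmean hT k x') ^ 2
        + t * dist b y ^ 2 - t * (1-t) * dist (indmean hT k x') y ^ 2) ∂ν) π :=
      hIH.integral_prod_right
    have hfinal1 : (∫ x', (∫ y, ((1-t) * dist b (indmean hT k x') ^ 2 + t * dist b y ^ 2
          - t * (1-t) * dist (indmean hT k x') y ^ 2) ∂ν) ∂π)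
        ≤ ∫ x', ((1-t)^2 * dist b (indmean hT k x') ^ 2 + t^2 * V) ∂π :=
      integral_mono hImarg ((hIA'.const_mul _).add (integrable_const _)) hinner
    have hfinal2 : (∫ x' : Fin (k+1) → T,
          ((1-t)^2 * dist b (indmean hT k x') ^ 2 + t^2 * V) ∂π)
        = (1-t)^2 * (∫ x', dist b (indmean hT k x') ^ 2 ∂π) + t^2 * V := by
      rw [integral_add (hIA'.const_mul _) (integrable_const _), integral_const_mul,
        integral_const]
      simp [measure_univ]
    have hklt : (0:ℝ) < (k:ℝ) + 1 := by positivity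
    have hklt2 : (0:ℝ) < (k:ℝ) + 2 := by positivity
    have harith : (1-t)^2 * (V/((k:ℝ)+1)) + t^2 * V = V/((k:ℝ)+2) := by
      rw [hts]
      field_simp
      ring
    have hih2 : (1-t)^2 * (∫ x', dist b (indmean hT k x') ^ 2 ∂π) + t^2 * V
        ≤ V/((k:ℝ)+2) := by
      rw [← harith]
      have := mul_le_mul_of_nonneg_left ih (sq_nonneg (1-t))
      linarith
    have hcast : ((k:ℝ)+1) + 1 = (k:ℝ) + 2 := by ring
    calc (∫ x, dist b (indmean hT (k+1) x) ^ 2 ∂(Measure.pi fun _ : Fin (k+1+1) => ν))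
        = ∫ p, dist b (interp hT (indmean hT k p.2) p.1 t) ^ 2 ∂P2 := hstep1
      _ ≤ V/((k:ℝ)+2) := by
          rw [hfub] at hmono
          exact le_trans (le_trans hmono hfinal1) (by rw [hfinal2]; exact hih2)
      _ = V / (((k+1 : ℕ):ℝ)+1) := by push_cast; ring
    
end Meas3


/-- If `ν` has support of diameter at most `D` in an ℝ-tree `T`, `b` is the barycenter
of `ν` and `bₙ` the barycenter of the pushforward of `ν^⊗n` under the inductive-mean
map `sₙ`, then `aₙ² = d(bₙ, b)² ≤ 4D²/n`. -/
theorem dist_expectation_inductiveMean_barycenter_sq_le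
    {T : Type*} [MetricSpace T] [CompleteSpace T] (hT : IsRTree T)
    [MeasurableSpace T] [BorelSpace T] [SecondCountableTopology T]
    (ν : Measure T) [IsProbabilityMeasure ν]
    (D : ℝ) (hD : EMetric.diam (msupport ν) ≤ ENNReal.ofReal D)
    (b : T) (hb : ∀ x : T, ∫ y, dist b y ^ 2 ∂ν ≤ ∫ y, dist x y ^ 2 ∂ν)
    (n : ℕ) (sn : (Fin (n+1) → T) → T) (hsn : Measurable sn)
    (hmean : ∀ x, IsInductiveMean n x (sn x))
    (bn : T)
    (hbn : ∀ x : T, ∫ y, dist bn y ^ 2 ∂((Measure.pi fun _ : Fin (n+1) => ν).map sn) ≤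
      ∫ y, dist x y ^ 2 ∂((Measure.pi fun _ : Fin (n+1) => ν).map sn)) :
    dist bn b ^ 2 ≤ 4 * D ^ 2 / (n+1 : ℝ) := by
  set D' := max D 0 with hD's
  have hD'0 : (0:ℝ) ≤ D' := le_max_right D 0
  have hD' : EMetric.diam (msupport ν) ≤ ENNReal.ofReal D' :=
    le_trans hD (ENNReal.ofReal_le_ofReal (le_max_left D 0))
  have hD'sq : D' ^ 2 ≤ D ^ 2 := by
    rcases le_total D 0 with h | h
    · rw [hD's, max_eq_right h]
      simpa using sq_nonneg D
    · rw [hD's, max_eq_left h]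
  have hsn_eq : ∀ x, sn x = indmean hT n x := fun x =>
    indmean_unique hT n x (sn x) (hmean x)
  set π := Measure.pi fun _ : Fin (n+1) => ν with hπ
  set μ := π.map sn with hμ
  haveI : IsProbabilityMeasure μ := Measure.isProbabilityMeasure_map hsn.aemeasurable
  obtain ⟨x₀, hx₀⟩ := msupport_nonempty ν
  set V := ∫ y, dist b y ^ 2 ∂ν with hV
  have hVD : V ≤ D' ^ 2 := V_le_D_sq ν hD'0 hD' b hb
  have hst := sturm hT hD'0 hD' b hb n
  have hcont : Continuous fun y : T => dist b y ^ 2 :=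
    (continuous_const.dist continuous_id).pow 2
  have hmap : (∫ y, dist b y ^ 2 ∂μ) = ∫ x, dist b (sn x) ^ 2 ∂π :=
    integral_map hsn.aemeasurable hcont.aestronglyMeasurable
  have hWn : (∫ y, dist b y ^ 2 ∂μ) ≤ V / (n+1) := by
    rw [hmap]
    have heq : (fun x => dist b (sn x) ^ 2) = fun x => dist b (indmean hT n x) ^ 2 :=
      funext fun x => by rw [hsn_eq x]
    rw [heq]
    exact hst
  -- a.e. bound on π for the inductive mean
  have hind_bound : ∀ᵐ x ∂π, dist b (sn x) ≤ dist b x₀ + D' := by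
    filter_upwards [ae_pi_mem_msupport ν n] with x hx
    rw [hsn_eq x]
    have h1 : dist (indmean hT n x) x₀ ≤ D' :=
      indmean_dist_le hT n x x₀ D' fun i => dist_le_of_mem_msupport hD'0 hD' (hx i) hx₀
    calc dist b (indmean hT n x) ≤ dist b x₀ + dist x₀ (indmean hT n x) :=
          dist_triangle _ _ _
      _ ≤ dist b x₀ + D' := by rw [dist_comm x₀]; linarith
  have hI1 : Integrable (fun y => dist b y ^ 2) μ := by
    rw [hμ, integrable_map_measure hcont.aestronglyMeasurable hsn.aemeasurable]
    refine Integrable.mono' (integrable_const ((dist b x₀ + D')^2))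
      ((hcont.measurable.comp hsn).aestronglyMeasurable) ?_
    filter_upwards [hind_bound] with x hx
    rw [Function.comp_apply, Real.norm_eq_abs, abs_of_nonneg (sq_nonneg _)]
    nlinarith [dist_nonneg (x := b) (y := sn x)]
  have hcont2 : Continuous fun y : T => dist bn y ^ 2 :=
    (continuous_const.dist continuous_id).pow 2
  have hI2 : Integrable (fun y => dist bn y ^ 2) μ := by
    rw [hμ, integrable_map_measure hcont2.aestronglyMeasurable hsn.aemeasurable]
    refine Integrable.mono' (integrable_const ((dist bn b + (dist b x₀ + D'))^2))
      ((hcont2.measurable.comp hsn).aestronglyMeasurable) ?_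
    filter_upwards [hind_bound] with x hx
    rw [Function.comp_apply, Real.norm_eq_abs, abs_of_nonneg (sq_nonneg _)]
    have h1 : dist bn (sn x) ≤ dist bn b + dist b (sn x) := dist_triangle _ _ _
    nlinarith [dist_nonneg (x := bn) (y := sn x), dist_nonneg (x := bn) (y := b),
      dist_nonneg (x := b) (y := sn x)]
  have hpt : ∀ y, dist bn b ^ 2 ≤ 2 * dist bn y ^ 2 + 2 * dist b y ^ 2 := by
    intro y
    have h1 : dist bn b ≤ dist bn y + dist y b := dist_triangle _ _ _
    have h2 : dist y b = dist b y := dist_comm _ _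
    nlinarith [sq_nonneg (dist bn y - dist b y), dist_nonneg (x := bn) (y := b),
      dist_nonneg (x := bn) (y := y), dist_nonneg (x := b) (y := y)]
  have hbnb : dist bn b ^ 2 ≤ 4 * (∫ y, dist b y ^ 2 ∂μ) := by
    have hc : dist bn b ^ 2 = ∫ _, dist bn b ^ 2 ∂μ := by
      rw [integral_const]; simp [measure_univ]
    have hmono2 : (∫ _, dist bn b ^ 2 ∂μ) ≤
        ∫ y, (2 * dist bn y ^ 2 + 2 * dist b y ^ 2) ∂μ :=
      integral_mono (integrable_const _) ((hI2.const_mul 2).add (hI1.const_mul 2))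
        fun y => hpt y
    have hsum : (∫ y, (2 * dist bn y ^ 2 + 2 * dist b y ^ 2) ∂μ)
        = 2 * (∫ y, dist bn y ^ 2 ∂μ) + 2 * (∫ y, dist b y ^ 2 ∂μ) := by
      rw [integral_add (hI2.const_mul 2) (hI1.const_mul 2), integral_const_mul,
        integral_const_mul]
    have hbn' : (∫ y, dist bn y ^ 2 ∂μ) ≤ ∫ y, dist b y ^ 2 ∂μ := hbn b
    rw [hc]
    linarith
  have hnpos : (0:ℝ) < (n:ℝ) + 1 := by positivity
  calc dist bn b ^ 2 ≤ 4 * (∫ y, dist b y ^ 2 ∂μ) := hbnb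
    _ ≤ 4 * (V / (n+1)) := by linarith
    _ = 4 * V / (n+1) := by ring
    _ ≤ 4 * D' ^ 2 / (n+1) := by gcongr
    _ ≤ 4 * D ^ 2 / (n+1) := by gcongr
end
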